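/- arXiv:math/0610169 — 4 statements merged into one kernel-verified Lean document; each statement's English description precedes it below -/
import Mathlib

section
/- Let $k=1$ and $G=\mathbb{C}^{\times}\times SL_2(\mathbb{C})$, let $V=V_{1,1}\oplus V_{1,4}\oplus V_{2,4}\oplus V_{3,3}\oplus V_{4,2}$ (where the character $m\in\mathbb{Z}$ acts as $t\mapsto t^{m}$), and let $v=(v_1,\;x^2y^2,\;x^2(y-x)^2,\;xy(y-x),\;x^2)\in V$, where $v_1$ is any nonzero linear form. Then the orbit closure $\overline{G\langle v\rangle}\subseteq\mathbb{P}(V)$ contains infinitely many $G$-orbits. -/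
open scoped BigOperators

noncomputable section

/-- `SL₂(ℂ)`. -/
abbrev SL2 : Type := Matrix.SpecialLinearGroup (Fin 2) ℂ

/-- The coefficient space of `V = ⊕ᵢ V_{χᵢ,nᵢ}`: the `i`-th component is the space of
binary forms of degree `n i`, recorded by its `n i + 1` coefficients. -/
abbrev BinVec {s : ℕ} (n : Fin s → ℕ) : Type := (i : Fin s) → Fin (n i + 1) → ℂ

/-- The exponent multiset of the monomial `x^(n-j) y^j`. -/
def monExp (n j : ℕ) : Fin 2 →₀ ℕ :=
  Finsupp.single (0 : Fin 2) (n - j) + Finsupp.single (1 : Fin 2) j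

/-- The binary form of degree `n` with coefficient vector `c`:
`∑ⱼ c j • x^(n-j) y^j`, as a polynomial in the two variables `X 0 = x`, `X 1 = y`. -/
def toPoly {n : ℕ} (c : Fin (n + 1) → ℂ) : MvPolynomial (Fin 2) ℂ :=
  ∑ j : Fin (n + 1), MvPolynomial.monomial (monExp n (j : ℕ)) (c j)

/-- The coefficient vector of (the degree-`n` homogeneous part of) a polynomial. -/
def ofPoly (n : ℕ) (f : MvPolynomial (Fin 2) ℂ) : Fin (n + 1) → ℂ :=
  fun j => MvPolynomial.coeff (monExp n (j : ℕ)) f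

/-- The substitution action of `SL₂(ℂ)` on binary forms:
`f(x,y) ↦ f(κx + μy, λx + νy)` for `g = !![κ, λ; μ, ν]`. -/
def subst (g : SL2) (f : MvPolynomial (Fin 2) ℂ) : MvPolynomial (Fin 2) ℂ :=
  MvPolynomial.aeval
    (fun j : Fin 2 =>
      MvPolynomial.C ((g : Matrix (Fin 2) (Fin 2) ℂ) 0 j) * MvPolynomial.X 0 +
      MvPolynomial.C ((g : Matrix (Fin 2) (Fin 2) ℂ) 1 j) * MvPolynomial.X 1) f

/-- The value `χ(t) = t₁^{χ⁽¹⁾} ⋯ t_k^{χ⁽ᵏ⁾}` of the character `χ ∈ ℤᵏ` at `t ∈ (ℂˣ)ᵏ`. -/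
def charVal {k : ℕ} (χ : Fin k → ℤ) (t : Fin k → ℂˣ) : ℂ :=
  ∏ j, ((t j : ℂ) ^ χ j)

/-- The action of `G = (ℂˣ)ᵏ × SL₂(ℂ)` on `V = ⊕ᵢ V_{χᵢ,nᵢ}`. -/
def Gact {k s : ℕ} (χ : Fin s → Fin k → ℤ) (n : Fin s → ℕ)
    (g : (Fin k → ℂˣ) × SL2) (v : BinVec n) : BinVec n :=
  fun i => ofPoly (n i) (MvPolynomial.C (charVal (χ i) g.1) * subst g.2 (toPoly (v i)))

/-- The `G`-orbit of `v ∈ V`. -/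
def Gorbit {k s : ℕ} (χ : Fin s → Fin k → ℤ) (n : Fin s → ℕ) (v : BinVec n) :
    Set (BinVec n) :=
  {w | ∃ g : (Fin k → ℂˣ) × SL2, w = Gact χ n g v}

/-- The upper triangular element `!![κ, l; 0, κ⁻¹]` of `SL₂(ℂ)`. -/
def upperSL (κ : ℂˣ) (l : ℂ) : SL2 :=
  ⟨!![(κ : ℂ), l; 0, ((κ⁻¹ : ℂˣ) : ℂ)], by
    rw [Matrix.det_fin_two_of]; simp⟩

/-- The orbit of `v ∈ V` under the Borel subgroup
`B = (ℂˣ)ᵏ × {upper triangular matrices} ⊆ G`. -/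
def Borbit {k s : ℕ} (χ : Fin s → Fin k → ℤ) (n : Fin s → ℕ) (v : BinVec n) :
    Set (BinVec n) :=
  {w | ∃ (t : Fin k → ℂˣ) (κ : ℂˣ) (l : ℂ), w = Gact χ n (t, upperSL κ l) v}

/-- The Zariski topology on affine space `ℂ^σ`: generated by the complements of
hypersurfaces, i.e. the closed sets are the zero loci of sets of polynomials. -/
def zTop (σ : Type) : TopologicalSpace (σ → ℂ) :=
  TopologicalSpace.generateFrom
    {U | ∃ p : MvPolynomial σ ℂ, U = {x | MvPolynomial.eval x p ≠ 0}}

/-- The Zariski topology on `V`, transported along the coordinate identification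
`V ≅ ℂ^{Σᵢ (nᵢ+1)}`. -/
def vTop {s : ℕ} (n : Fin s → ℕ) : TopologicalSpace (BinVec n) :=
  TopologicalSpace.induced
    (fun v (q : Σ i : Fin s, Fin (n i + 1)) => v q.1 q.2)
    (zTop (Σ i : Fin s, Fin (n i + 1)))

/-- Zariski closure in `V`. -/
def vClosure {s : ℕ} {n : Fin s → ℕ} (S : Set (BinVec n)) : Set (BinVec n) :=
  @closure _ (vTop n) S

/-- `e(∞) = ∑_{a ∈ ℂ} e(a)` for a multiplicity function `e : ℂ →₀ ℕ`. -/
def eInf (e : ℂ →₀ ℕ) : ℕ := e.sum fun _ m => m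

/-- The normalized binary form `x^(n - e(∞)) ∏_{a ∈ ℂ} (a x + y)^{e(a)}`
attached to a multiplicity function `e`. -/
def normForm (n : ℕ) (e : ℂ →₀ ℕ) : MvPolynomial (Fin 2) ℂ :=
  MvPolynomial.X 0 ^ (n - eInf e) *
    ∏ a ∈ e.support, (MvPolynomial.C a * MvPolynomial.X 0 + MvPolynomial.X 1) ^ e a

/-- The pairing `⟨χ'ᵢ, R⟩` of a characteristic point `χ'ᵢ = (χᵢ, nᵢ) ∈ ℚ^{k+1}` with a
vector `R = (r₁, …, r_k, p) ∈ ℚ^{k+1}`. -/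
def pairQ {k : ℕ} (χi : Fin k → ℤ) (ni : ℕ) (R : (Fin k → ℚ) × ℚ) : ℚ :=
  (∑ j, (χi j : ℚ) * R.1 j) + (ni : ℚ) * R.2

/-- `pᵢ(d) = ∏_{a ∈ ℂ, a ≠ d} (a - d)^{e(a)}`. -/
def pval (e : ℂ →₀ ℕ) (d : ℂ) : ℂ :=
  ∏ a ∈ e.support \ {d}, (a - d) ^ e a

/-- The standard vector `v(d, R)`, whose `i`-th component is `pᵢ(d) x^{nᵢ}` for
`i ∈ I(R) = {i : ⟨χ'ᵢ, R⟩ = 0}` and `0` otherwise. -/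
def standardVec {k s : ℕ} (χ : Fin s → Fin k → ℤ) (n : Fin s → ℕ)
    (e : Fin s → ℂ →₀ ℕ) (d : ℂ) (R : (Fin k → ℚ) × ℚ) : BinVec n :=
  fun i =>
    if pairQ (χ i) (n i) R = 0 then
      ofPoly (n i) (MvPolynomial.C (pval (e i) d) * MvPolynomial.X 0 ^ (n i))
    else 0

/-- The Zariski topology on `ℙ(V)`, coinduced from the Zariski topology on `V ∖ {0}`. -/
def pTop {s : ℕ} (n : Fin s → ℕ) :
    TopologicalSpace (Projectivization ℂ (BinVec n)) :=
  TopologicalSpace.coinduced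
    (fun v : {v : BinVec n // v ≠ 0} => Projectivization.mk ℂ v.1 v.2)
    (TopologicalSpace.induced Subtype.val (vTop n))

/-- Zariski closure in `ℙ(V)`. -/
def pClosure {s : ℕ} {n : Fin s → ℕ} (S : Set (Projectivization ℂ (BinVec n))) :
    Set (Projectivization ℂ (BinVec n)) :=
  @closure _ (pTop n) S

/-- The `G`-orbit of the point `⟨v⟩ ∈ ℙ(V)`. -/
def pOrbit {k s : ℕ} (χ : Fin s → Fin k → ℤ) (n : Fin s → ℕ) (v : BinVec n) :
    Set (Projectivization ℂ (BinVec n)) :=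
  {q | ∃ (g : (Fin k → ℂˣ) × SL2) (h : Gact χ n g v ≠ 0),
      q = Projectivization.mk ℂ (Gact χ n g v) h}
/-- The curve `t ↦ !![t^p, c·h(t)·t^q; 0, t^{-p}]` in `SL₂(ℂ)`. -/
def curveMat (p q : ℤ) (c : ℂ) (h : Polynomial ℂ) (t : ℂˣ) : SL2 :=
  ⟨!![((t ^ p : ℂˣ) : ℂ), c * Polynomial.eval (t : ℂ) h * ((t ^ q : ℂˣ) : ℂ);
      0, ((t ^ (-p) : ℂˣ) : ℂ)], by
    rw [Matrix.det_fin_two_of]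
    simp only [zpow_neg, Units.val_zpow_eq_zpow_val, Units.val_inv_eq_inv_val, mul_zero, sub_zero]
    exact mul_inv_cancel₀ (zpow_ne_zero _ (Units.ne_zero t))⟩

/-- The substitution action of `SL₂(ℂ)` on a binary form of degree `m`,
in coefficient coordinates. -/
def slCoefAct (m : ℕ) (g : SL2) (c : Fin (m + 1) → ℂ) : Fin (m + 1) → ℂ :=
  ofPoly m (subst g (toPoly c))

/-- The (diagonal) substitution action of `SL₂(ℂ)` on `V = ⊕ᵢ V_{nᵢ}`. -/
def slAct {s : ℕ} {n : Fin s → ℕ} (g : SL2) (v : BinVec n) : BinVec n :=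
  fun i => slCoefAct (n i) g (v i)

/-- The `SL₂(ℂ)`-orbit of `⟨v⟩ ∈ ℙ(V)`. -/
def slPOrbit {s : ℕ} (n : Fin s → ℕ) (v : BinVec n) :
    Set (Projectivization ℂ (BinVec n)) :=
  {q | ∃ (g : SL2) (h : slAct g v ≠ 0), q = Projectivization.mk ℂ (slAct g v) h}

/-- The Zariski topology on `ℙ(V_{n₁}) × ⋯ × ℙ(V_{n_m})`, coinduced from the Zariski
topology on the locus of vectors in `⊕ᵢ V_{nᵢ}` with all components nonzero. -/
def prodPTop {m : ℕ} (n : Fin m → ℕ) :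
    TopologicalSpace ((i : Fin m) → Projectivization ℂ (Fin (n i + 1) → ℂ)) :=
  TopologicalSpace.coinduced
    (fun v : {v : BinVec n // ∀ i, v i ≠ 0} =>
      fun i => Projectivization.mk ℂ (v.1 i) (v.2 i))
    (TopologicalSpace.induced Subtype.val (vTop n))

/-- The diagonal `SL₂(ℂ)`-orbit of the point `(⟨v₁⟩, …, ⟨v_m⟩)` in
`ℙ(V_{n₁}) × ⋯ × ℙ(V_{n_m})`. -/
def prodOrbit {m : ℕ} (n : Fin m → ℕ) (v : BinVec n) :
    Set ((i : Fin m) → Projectivization ℂ (Fin (n i + 1) → ℂ)) :=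
  {q | ∃ g : SL2, ∀ i, ∃ h : slCoefAct (n i) g (v i) ≠ 0,
      q i = Projectivization.mk ℂ (slCoefAct (n i) g (v i)) h}

/-- The dimension of a subset of `V`, i.e. the topological Krull dimension of the
subspace in the Zariski topology (with `⊥` collapsed to `0`). -/
def vDim {s : ℕ} {n : Fin s → ℕ} (S : Set (BinVec n)) : ℕ∞ :=
  letI := vTop n
  WithBot.unbotD 0 (topologicalKrullDim S)

/-- `d(X, H)`: the minimal codimension in `X` of an orbit (for the orbit map `orb`)
of a point of `X`. -/
def minOrbitCodim {s : ℕ} {n : Fin s → ℕ} (X : Set (BinVec n))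
    (orb : BinVec n → Set (BinVec n)) : ℕ∞ :=
  ⨅ x ∈ X, (vDim X - vDim (orb x))

/-- The modality `mod(Y, H) = max_X d(X, H)`, the maximum over all irreducible
invariant subvarieties `X ⊆ Y`. -/
def modality {s : ℕ} {n : Fin s → ℕ} (Y : Set (BinVec n))
    (orb : BinVec n → Set (BinVec n)) : ℕ∞ :=
  ⨆ X ∈ {X : Set (BinVec n) |
      X ⊆ Y ∧ (letI := vTop n; IsIrreducible X) ∧ ∀ x ∈ X, orb x ⊆ X},
    minOrbitCodim X orb

/-- The pairing `⟨(1, χᵢ, nᵢ), R⟩` of a hatted characteristic point with a vector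
`R ∈ ℚ^{k+2}`. -/
def hatPair {k : ℕ} (χi : Fin k → ℤ) (ni : ℕ) (R : (Fin (k + 1) → ℚ) × ℚ) : ℚ :=
  R.1 0 + (∑ j, (χi j : ℚ) * R.1 j.succ) + (ni : ℚ) * R.2

open MvPolynomial in
lemma mon_two (a b : ℕ) (c : ℂ) :
    (monomial (Finsupp.single (0:Fin 2) a + Finsupp.single (1:Fin 2) b) c
      : MvPolynomial (Fin 2) ℂ) = C c * X 0 ^ a * X 1 ^ b := by
  rw [X_pow_eq_monomial, X_pow_eq_monomial, mul_assoc, monomial_mul, C_mul_monomial]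
  simp

open MvPolynomial in
lemma coeff_toPoly {n : ℕ} (c : Fin (n+1) → ℂ) (j : Fin (n+1)) :
    coeff (monExp n j) (toPoly c) = c j := by
  have hinj : ∀ j' : Fin (n+1), monExp n (j':ℕ) = monExp n (j:ℕ) ↔ j' = j := by
    intro j'
    constructor
    · intro h
      have := DFunLike.congr_fun h 1
      simp [monExp, Finsupp.single_apply] at this
      exact Fin.ext this
    · rintro rfl; rfl
  rw [toPoly, coeff_sum]
  simp only [coeff_monomial, hinj]
  simp

lemma ofPoly_toPoly {n : ℕ} (c : Fin (n+1) → ℂ) : ofPoly n (toPoly c) = c := by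
  funext j; exact coeff_toPoly c j

open MvPolynomial in
lemma ofPoly_C_mul (n : ℕ) (s : ℂ) (f : MvPolynomial (Fin 2) ℂ) (j : Fin (n+1)) :
    ofPoly n (C s * f) j = s * ofPoly n f j := by
  simp [ofPoly]

open MvPolynomial in
lemma toPoly_smul {n : ℕ} (a : ℂ) (c : Fin (n+1) → ℂ) :
    toPoly (a • c) = C a * toPoly c := by
  simp [toPoly, Finset.mul_sum, C_mul_monomial, Pi.smul_apply, smul_eq_mul]
open MvPolynomial in
lemma monExp_monomial (n j : ℕ) (c : ℂ) :
    (monomial (monExp n j) c : MvPolynomial (Fin 2) ℂ) = C c * X 0 ^ (n-j) * X 1 ^ j := by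
  rw [monExp]; exact mon_two _ _ _

open MvPolynomial in
lemma toPoly_one (c : Fin 2 → ℂ) :
    toPoly (n := 1) c = C (c 0) * X 0 + C (c 1) * X 1 := by
  rw [toPoly, Fin.sum_univ_two]
  simp only [monExp_monomial]
  norm_num

open MvPolynomial in
lemma toPoly_two (c : Fin 3 → ℂ) :
    toPoly (n := 2) c = C (c 0) * X 0 ^ 2 + C (c 1) * X 0 * X 1 + C (c 2) * X 1 ^ 2 := by
  rw [toPoly, Fin.sum_univ_three]
  simp only [monExp_monomial]
  norm_num

open MvPolynomial in
lemma toPoly_three (c : Fin 4 → ℂ) :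
    toPoly (n := 3) c = C (c 0) * X 0 ^ 3 + C (c 1) * X 0 ^ 2 * X 1
      + C (c 2) * X 0 * X 1 ^ 2 + C (c 3) * X 1 ^ 3 := by
  rw [toPoly, Fin.sum_univ_four]
  simp only [monExp_monomial, show ((3:Fin 4):ℕ) = 3 from rfl]
  norm_num

open MvPolynomial in
lemma toPoly_four (c : Fin 5 → ℂ) :
    toPoly (n := 4) c = C (c 0) * X 0 ^ 4 + C (c 1) * X 0 ^ 3 * X 1
      + C (c 2) * X 0 ^ 2 * X 1 ^ 2 + C (c 3) * X 0 * X 1 ^ 3 + C (c 4) * X 1 ^ 4 := by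
  rw [toPoly, Fin.sum_univ_five]
  simp only [monExp_monomial, show ((3:Fin 5):ℕ) = 3 from rfl, show ((4:Fin 5):ℕ) = 4 from rfl]
  norm_num

open MvPolynomial in
lemma subst_X (g : SL2) (j : Fin 2) :
    subst g (X j) = C ((g : Matrix (Fin 2) (Fin 2) ℂ) 0 j) * X 0
      + C ((g : Matrix (Fin 2) (Fin 2) ℂ) 1 j) * X 1 := by
  simp [subst]

open MvPolynomial in
lemma subst_C_mul (g : SL2) (c : ℂ) (f : MvPolynomial (Fin 2) ℂ) :
    subst g (C c * f) = C c * subst g f := by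
  simp [subst]

lemma charVal_one_apply (m : ℤ) (τ : Fin 1 → ℂˣ) :
    charVal (fun _ => m) τ = ((τ 0 : ℂ)) ^ m := by
  simp [charVal]

open MvPolynomial in
lemma Gact_smul {k s : ℕ} (χ : Fin s → Fin k → ℤ) (n : Fin s → ℕ)
    (g : (Fin k → ℂˣ) × SL2) (a : ℂ) (v : BinVec n) :
    Gact χ n g (a • v) = a • Gact χ n g v := by
  funext i j
  simp only [Gact, Pi.smul_apply, smul_eq_mul]
  rw [toPoly_smul, subst_C_mul, mul_left_comm, ofPoly_C_mul]

open MvPolynomial in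
lemma subst_one (f : MvPolynomial (Fin 2) ℂ) : subst 1 f = f := by
  rw [subst]
  have : (fun j : Fin 2 =>
      C (((1:SL2) : Matrix (Fin 2) (Fin 2) ℂ) 0 j) * X 0 +
      C (((1:SL2) : Matrix (Fin 2) (Fin 2) ℂ) 1 j) * X 1) = (X : Fin 2 → MvPolynomial (Fin 2) ℂ) := by
    funext j
    fin_cases j <;> simp [Matrix.one_apply]
  rw [this, aeval_X_left_apply]

open MvPolynomial in
lemma Gact_one {k s : ℕ} (χ : Fin s → Fin k → ℤ) (n : Fin s → ℕ) (v : BinVec n) :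
    Gact χ n (1, 1) v = v := by
  funext i
  have hc : charVal (χ i) (1 : Fin k → ℂˣ) = 1 := by simp [charVal]
  simp [Gact, hc, subst_one, ofPoly_toPoly]

lemma pOrbit_smul {k s : ℕ} (χ : Fin s → Fin k → ℤ) (n : Fin s → ℕ)
    (v : BinVec n) (a : ℂ) (ha : a ≠ 0) :
    pOrbit χ n (a • v) = pOrbit χ n v := by
  ext q
  constructor
  · rintro ⟨g, h, rfl⟩
    have hGv : Gact χ n g v ≠ 0 := by
      intro h0
      apply h
      rw [Gact_smul, h0, smul_zero]
    refine ⟨g, hGv, ?_⟩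
    rw [Projectivization.mk_eq_mk_iff]
    exact ⟨Units.mk0 a ha, by rw [Gact_smul]; rfl⟩
  · rintro ⟨g, h, rfl⟩
    have hGv : Gact χ n g (a • v) ≠ 0 := by
      rw [Gact_smul]
      exact smul_ne_zero ha h
    refine ⟨g, hGv, ?_⟩
    rw [Projectivization.mk_eq_mk_iff]
    refine ⟨(Units.mk0 a ha)⁻¹, ?_⟩
    rw [Gact_smul]
    show _ • a • _ = _
    rw [Units.smul_def]
    simp [smul_smul, inv_mul_cancel₀ ha]

lemma mem_pOrbit_self {k s : ℕ} (χ : Fin s → Fin k → ℤ) (n : Fin s → ℕ)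
    (v : BinVec n) (hv : v ≠ 0) :
    Projectivization.mk ℂ v hv ∈ pOrbit χ n v := by
  refine ⟨(1,1), by rw [Gact_one]; exact hv, ?_⟩
  rw [Projectivization.mk_eq_mk_iff]
  exact ⟨1, by rw [Gact_one]; simp⟩
open MvPolynomial in
lemma zTop_exists_poly {σ : Type} {W : Set (σ → ℂ)} (h : @IsOpen _ (zTop σ) W)
    {x : σ → ℂ} (hx : x ∈ W) :
    ∃ p : MvPolynomial σ ℂ, eval x p ≠ 0 ∧ ∀ y, eval y p ≠ 0 → y ∈ W := by
  have h' : TopologicalSpace.GenerateOpen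
      {U | ∃ p : MvPolynomial σ ℂ, U = {x | MvPolynomial.eval x p ≠ 0}} W := h
  clear h
  induction h' with
  | basic u hu =>
    obtain ⟨p, rfl⟩ := hu
    exact ⟨p, hx, fun y hy => hy⟩
  | univ => exact ⟨1, by simp, fun y _ => trivial⟩
  | inter u v _ _ ihu ihv =>
    obtain ⟨p, hp, hps⟩ := ihu hx.1
    obtain ⟨q, hq, hqs⟩ := ihv hx.2
    refine ⟨p * q, by simp [hp, hq], fun y hy => ?_⟩
    rw [map_mul] at hy
    exact ⟨hps y (left_ne_zero_of_mul hy), hqs y (right_ne_zero_of_mul hy)⟩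
  | sUnion S _ ih =>
    obtain ⟨u, hu, hxu⟩ := hx
    obtain ⟨p, hp, hps⟩ := ih u hu hxu
    exact ⟨p, hp, fun y hy => ⟨u, hu, hps y hy⟩⟩

open MvPolynomial Polynomial in
lemma eval_aeval_poly {σ : Type} (p : MvPolynomial σ ℂ) (P : σ → Polynomial ℂ) (t : ℂ) :
    Polynomial.eval t (MvPolynomial.aeval P p)
      = MvPolynomial.eval (fun i => Polynomial.eval t (P i)) p := by
  induction p using MvPolynomial.induction_on with
  | C a => simp [MvPolynomial.aeval_C, Polynomial.algebraMap_eq]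
  | add f g hf hg => simp [hf, hg]
  | mul_X f i hf => simp [hf]

open MvPolynomial in
lemma mem_pClosure_of_curve {k s : ℕ} (χ : Fin s → Fin k → ℤ) (n : Fin s → ℕ)
    (v w : BinVec n) (hw : w ≠ 0) (γ : ℂ → BinVec n)
    (hpoly : ∀ ij : Σ i : Fin s, Fin (n i + 1), ∃ P : Polynomial ℂ,
      ∀ t, γ t ij.1 ij.2 = Polynomial.eval t P)
    (hγ0 : γ 0 = w) (hγne : ∀ t, γ t ≠ 0)
    (horb : ∀ t : ℂ, t ≠ 0 → ∃ (g : (Fin k → ℂˣ) × SL2) (c : ℂ),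
      c ≠ 0 ∧ γ t = c • Gact χ n g v) :
    Projectivization.mk ℂ w hw ∈ pClosure (pOrbit χ n v) := by
  classical
  letI := pTop n
  rw [pClosure, mem_closure_iff]
  intro U hU hxU
  -- unfold the topology on U
  set φ : BinVec n → ((q : Σ i : Fin s, Fin (n i + 1)) → ℂ) :=
    fun v q => v q.1 q.2 with hφ
  have hU1 : @IsOpen _ (TopologicalSpace.induced
      (Subtype.val : {v : BinVec n // v ≠ 0} → BinVec n) (vTop n))
      ((fun v : {v : BinVec n // v ≠ 0} => Projectivization.mk ℂ v.1 v.2) ⁻¹' U) :=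
    (@isOpen_coinduced _ _ (TopologicalSpace.induced
      (Subtype.val : {v : BinVec n // v ≠ 0} → BinVec n) (vTop n)) U
      (fun v : {v : BinVec n // v ≠ 0} => Projectivization.mk ℂ v.1 v.2)).mp hU
  obtain ⟨W1, hW1, hW1eq⟩ := (@isOpen_induced_iff _ _ (vTop n) _ _).mp hU1
  obtain ⟨W2, hW2, hW2eq⟩ := (@isOpen_induced_iff _ _
    (zTop (Σ i : Fin s, Fin (n i + 1))) W1 φ).mp hW1
  have hwW2 : φ w ∈ W2 := by
    have : (⟨w, hw⟩ : {v : BinVec n // v ≠ 0}) ∈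
        (fun v : {v : BinVec n // v ≠ 0} => Projectivization.mk ℂ v.1 v.2) ⁻¹' U := hxU
    rw [← hW1eq] at this
    rw [← hW2eq] at this
    exact this
  obtain ⟨p, hp0, hpsub⟩ := zTop_exists_poly hW2 hwW2
  choose P hP using hpoly
  set F : Polynomial ℂ := MvPolynomial.aeval P p with hF
  have hFeval : ∀ t, Polynomial.eval t F = MvPolynomial.eval (φ (γ t)) p := by
    intro t
    rw [hF, eval_aeval_poly]
    have : (fun i => Polynomial.eval t (P i)) = φ (γ t) := by
      funext ij
      exact (hP ij t).symm
    rw [this]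
  have hF0 : Polynomial.eval 0 F ≠ 0 := by
    rw [hFeval, hγ0]; exact hp0
  have hFne : F ≠ 0 := by
    intro h; rw [h] at hF0; simp at hF0
  have hfin : ({t : ℂ | F.IsRoot t} ∪ {0}).Finite :=
    (Polynomial.finite_setOf_isRoot hFne).union (Set.finite_singleton 0)
  obtain ⟨t, ht⟩ := hfin.infinite_compl.nonempty
  rw [Set.mem_compl_iff, Set.mem_union] at ht
  push_neg at ht
  obtain ⟨htroot, ht0⟩ := ht
  have ht0' : t ≠ 0 := ht0
  obtain ⟨g, c, hc, hγt⟩ := horb t ht0'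
  have hGv : Gact χ n g v ≠ 0 := by
    intro h0
    exact hγne t (by rw [hγt, h0, smul_zero])
  have hmem : Projectivization.mk ℂ (γ t) (hγne t) ∈ U := by
    have h1 : φ (γ t) ∈ W2 := by
      apply hpsub
      rw [← hFeval]
      exact htroot
    have h2 : (⟨γ t, hγne t⟩ : {v : BinVec n // v ≠ 0}) ∈
        (fun v : {v : BinVec n // v ≠ 0} => Projectivization.mk ℂ v.1 v.2) ⁻¹' U := by
      rw [← hW1eq, ← hW2eq]
      exact h1
    exact h2
  have hmk : Projectivization.mk ℂ (γ t) (hγne t)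
      = Projectivization.mk ℂ (Gact χ n g v) hGv := by
    rw [Projectivization.mk_eq_mk_iff]
    exact ⟨Units.mk0 c hc, hγt.symm⟩
  exact ⟨_, hmem, g, hGv, hmk⟩
section RingIds
variable {R : Type*} [CommRing R]

lemma rid0 (T S D c0 c1 x y : R) (h : T*S = 1) :
    T^6*S*(c0*(S*x) + c1*(D*S*x + T*y)) = T^4*(c0+c1*D)*x + c1*T^6*y := by
  linear_combination (T^4*c0*x + T^4*D*c1*x + T^5*S*c0*x + T^5*S*D*c1*x + T^6*c1*y) * h

lemma rid1 (T S D x y : R) (h : T*S = 1) :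
    T^6*S*((S*x)^2*(D*S*x + T*y)^2) = T*D^2*x^4 + (2*D*T^3)*(x^3*y) + T^5*(x^2*y^2) := by
  linear_combination (T*D^2*x^4 + T^2*S*D^2*x^4 + (2)*T^3*D*x^3*y + T^3*S^2*D^2*x^4 + (2)*T^4*S*D*x^3*y + T^4*S^3*D^2*x^4 + T^5*x^2*y^2 + (2)*T^5*S^2*D*x^3*y + T^5*S^4*D^2*x^4 + T^6*S*x^2*y^2 + (2)*T^6*S^3*D*x^3*y + T^7*S^2*x^2*y^2) * h

lemma rid2 (T S D x y : R) (h : T*S = 1) :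
    T^6*S^2*((S*x)^2*((D*S*x + T*y) - S*x)^2)
      = (D-1)^2*x^4 + (2*(D-1)*T^2)*(x^3*y) + T^4*(x^2*y^2) := by
  linear_combination (x^4 + (-2)*D*x^4 + D^2*x^4 + T*S*x^4 + (-2)*T*S*D*x^4 + T*S*D^2*x^4 + (-2)*T^2*x^3*y + (2)*T^2*D*x^3*y + T^2*S^2*x^4 + (-2)*T^2*S^2*D*x^4 + T^2*S^2*D^2*x^4 + (-2)*T^3*S*x^3*y + (2)*T^3*S*D*x^3*y + T^3*S^3*x^4 + (-2)*T^3*S^3*D*x^4 + T^3*S^3*D^2*x^4 + T^4*x^2*y^2 + (-2)*T^4*S^2*x^3*y + (2)*T^4*S^2*D*x^3*y + T^4*S^4*x^4 + (-2)*T^4*S^4*D*x^4 + T^4*S^4*D^2*x^4 + T^5*S*x^2*y^2 + (-2)*T^5*S^3*x^3*y + (2)*T^5*S^3*D*x^3*y + T^5*S^5*x^4 + (-2)*T^5*S^5*D*x^4 + T^5*S^5*D^2*x^4 + T^6*S^2*x^2*y^2 + (-2)*T^6*S^4*x^3*y + (2)*T^6*S^4*D*x^3*y + T^7*S^3*x^2*y^2)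 * h

lemma rid3 (T S D x y : R) (h : T*S = 1) :
    T^6*S^3*((S*x)*(D*S*x + T*y)*((D*S*x + T*y) - S*x))
      = D*(D-1)*x^3 + ((2*D-1)*T^2)*(x^2*y) + T^4*(x*y^2) := by
  linear_combination ((-1)*D*x^3 + D^2*x^3 + (-1)*T*S*D*x^3 + T*S*D^2*x^3 + (-1)*T^2*x^2*y + (2)*T^2*D*x^2*y + (-1)*T^2*S^2*D*x^3 + T^2*S^2*D^2*x^3 + (-1)*T^3*S*x^2*y + (2)*T^3*S*D*x^2*y + (-1)*T^3*S^3*D*x^3 + T^3*S^3*D^2*x^3 + T^4*x*y^2 + (-1)*T^4*S^2*x^2*y + (2)*T^4*S^2*D*x^2*y + (-1)*T^4*S^4*D*x^3 + T^4*S^4*D^2*x^3 + T^5*S*x*y^2 + (-1)*T^5*S^3*x^2*y + (2)*T^5*S^3*D*x^2*y + (-1)*T^5*S^5*D*x^3 + T^5*S^5*D^2*x^3 + T^6*S^2*x*y^2 + (-1)*T^6*S^4*x^2*y + (2)*T^6*S^4*D*x^2*y + T^7*S^3*x*y^2) * h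

lemma rid4 (T S x : R) (h : T*S = 1) :
    T^6*S^4*(S*x)^2 = x^2 := by
  linear_combination (x^2 + T*S*x^2 + T^2*S^2*x^2 + T^3*S^3*x^2 + T^4*S^4*x^2 + T^5*S^5*x^2) * h

end RingIds

open MvPolynomial in
lemma pow_two_toPoly (s a b : ℂ) :
    C s * (C a * X 0 + C b * X 1)^2
      = toPoly ![s*a^2, 2*s*a*b, s*b^2] := by
  rw [toPoly_two]
  simp only [Matrix.cons_val_zero, Matrix.cons_val_one, Matrix.head_cons, Matrix.cons_val_two,
    Matrix.tail_cons]
  push_cast [map_mul, map_pow, map_add, map_ofNat]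
  ring

open MvPolynomial in
lemma pow_three_toPoly (s a b : ℂ) :
    C s * (C a * X 0 + C b * X 1)^3
      = toPoly ![s*a^3, 3*s*a^2*b, 3*s*a*b^2, s*b^3] := by
  rw [toPoly_three]
  simp only [Matrix.cons_val_zero, Matrix.cons_val_one, Matrix.head_cons, Matrix.cons_val_two,
    Matrix.tail_cons, Matrix.cons_val_three]
  push_cast [map_mul, map_pow, map_add, map_ofNat]
  ring

open MvPolynomial in
lemma pow_four_toPoly (s a b : ℂ) :
    C s * (C a * X 0 + C b * X 1)^4
      = toPoly ![s*a^4, 4*s*a^3*b, 6*s*a^2*b^2, 4*s*a*b^3, s*b^4] := by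
  rw [toPoly_four]
  simp only [Matrix.cons_val_zero, Matrix.cons_val_one, Matrix.head_cons, Matrix.cons_val_two,
    Matrix.tail_cons, Matrix.cons_val_three, Matrix.cons_val_four]
  push_cast [map_mul, map_pow, map_add, map_ofNat]
  ring
noncomputable def Wd (d : ℂ) : BinVec ![1,4,4,3,2] :=
  Fin.cons ![0,0] <| Fin.cons ![0,0,0,0,0] <| Fin.cons ![(d-1)^2,0,0,0,0] <|
    Fin.cons ![d*(d-1),0,0,0] <| Fin.cons ![1,0,0] (fun i => i.elim0)

noncomputable def curveVec (c0 c1 d t : ℂ) : BinVec ![1,4,4,3,2] :=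
  Fin.cons ![t^4*(c0+c1*d), c1*t^6] <| Fin.cons ![t*d^2, 2*d*t^3, t^5, 0, 0] <|
    Fin.cons ![(d-1)^2, 2*(d-1)*t^2, t^4, 0, 0] <|
    Fin.cons ![d*(d-1), (2*d-1)*t^2, t^4, 0] <| Fin.cons ![1,0,0] (fun i => i.elim0)

lemma Wd_ne_zero (d : ℂ) : Wd d ≠ 0 := by
  intro h
  have h1 := congrFun (congrFun h 4) 0
  exact one_ne_zero ((show (1:ℂ) = Wd d 4 0 from rfl).trans h1)

lemma curveVec_ne_zero (c0 c1 d t : ℂ) : curveVec c0 c1 d t ≠ 0 := by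
  intro h
  have h1 := congrFun (congrFun h 4) 0
  exact one_ne_zero ((show (1:ℂ) = curveVec c0 c1 d t 4 0 from rfl).trans h1)

lemma curveVec_zero (c0 c1 d : ℂ) : curveVec c0 c1 d 0 = Wd d := by
  funext i j
  fin_cases i <;> fin_cases j <;>
    simp [curveVec, Wd] <;> norm_num

open MvPolynomial in
lemma comp2_key (d t : ℂ) (ht : t ≠ 0) :
    C (t^6) * (C ((t⁻¹)^2) *
      ((C t⁻¹ * X 0 + C 0 * X 1)^2
        * ((C (d*t⁻¹) * X 0 + C t * X 1) - (C t⁻¹ * X 0 + C 0 * X 1))^2))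
      = toPoly ![(d-1)^2, 2*(d-1)*t^2, t^4, 0, 0] := by
  have hC : (C t : MvPolynomial (Fin 2) ℂ) * C t⁻¹ = 1 := by
    rw [← map_mul, mul_inv_cancel₀ ht, map_one]
  rw [toPoly_four]
  simp only [Matrix.cons_val_zero, Matrix.cons_val_one, Matrix.head_cons, Matrix.cons_val_two,
    Matrix.tail_cons, Matrix.cons_val_three, Matrix.cons_val_four, map_zero, zero_mul, add_zero,
    map_mul, map_pow, map_sub, map_add, map_one, map_ofNat]
  linear_combination rid2 (C t) (C t⁻¹) (C d) (X 0) (X 1) hC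

open MvPolynomial in
lemma comp0_key (c0 c1 d t : ℂ) (ht : t ≠ 0) :
    C (t^6) * (C t⁻¹ *
      (C c0 * (C t⁻¹ * X 0 + C 0 * X 1) + C c1 * (C (d*t⁻¹) * X 0 + C t * X 1)))
      = toPoly ![t^4*(c0+c1*d), c1*t^6] := by
  have hC : (C t : MvPolynomial (Fin 2) ℂ) * C t⁻¹ = 1 := by
    rw [← map_mul, mul_inv_cancel₀ ht, map_one]
  rw [toPoly_one]
  simp only [Matrix.cons_val_zero, Matrix.cons_val_one, Matrix.head_cons, map_zero, zero_mul,
    add_zero, map_mul, map_pow, map_add, map_one, map_ofNat]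
  linear_combination rid0 (C t) (C t⁻¹) (C d) (C c0) (C c1) (X 0) (X 1) hC

open MvPolynomial in
lemma comp1_key (d t : ℂ) (ht : t ≠ 0) :
    C (t^6) * (C t⁻¹ *
      ((C t⁻¹ * X 0 + C 0 * X 1)^2 * (C (d*t⁻¹) * X 0 + C t * X 1)^2))
      = toPoly ![t*d^2, 2*d*t^3, t^5, 0, 0] := by
  have hC : (C t : MvPolynomial (Fin 2) ℂ) * C t⁻¹ = 1 := by
    rw [← map_mul, mul_inv_cancel₀ ht, map_one]
  rw [toPoly_four]
  simp only [Matrix.cons_val_zero, Matrix.cons_val_one, Matrix.head_cons, Matrix.cons_val_two,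
    Matrix.tail_cons, Matrix.cons_val_three, Matrix.cons_val_four, map_zero, zero_mul, add_zero,
    map_mul, map_pow, map_add, map_one, map_ofNat]
  linear_combination rid1 (C t) (C t⁻¹) (C d) (X 0) (X 1) hC

open MvPolynomial in
lemma comp3_key (d t : ℂ) (ht : t ≠ 0) :
    C (t^6) * (C ((t⁻¹)^3) *
      ((C t⁻¹ * X 0 + C 0 * X 1) * (C (d*t⁻¹) * X 0 + C t * X 1)
        * ((C (d*t⁻¹) * X 0 + C t * X 1) - (C t⁻¹ * X 0 + C 0 * X 1))))
      = toPoly ![d*(d-1), (2*d-1)*t^2, t^4, 0] := by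
  have hC : (C t : MvPolynomial (Fin 2) ℂ) * C t⁻¹ = 1 := by
    rw [← map_mul, mul_inv_cancel₀ ht, map_one]
  rw [toPoly_three]
  simp only [Matrix.cons_val_zero, Matrix.cons_val_one, Matrix.head_cons, Matrix.cons_val_two,
    Matrix.tail_cons, Matrix.cons_val_three, map_zero, zero_mul, add_zero,
    map_mul, map_pow, map_add, map_sub, map_one, map_ofNat]
  linear_combination rid3 (C t) (C t⁻¹) (C d) (X 0) (X 1) hC

open MvPolynomial in
lemma comp4_key (t : ℂ) (ht : t ≠ 0) :
    C (t^6) * (C ((t⁻¹)^4) * (C t⁻¹ * X 0 + C 0 * X 1)^2)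
      = toPoly ![(1:ℂ), 0, 0] := by
  have hC : (C t : MvPolynomial (Fin 2) ℂ) * C t⁻¹ = 1 := by
    rw [← map_mul, mul_inv_cancel₀ ht, map_one]
  rw [toPoly_two]
  simp only [Matrix.cons_val_zero, Matrix.cons_val_one, Matrix.head_cons, Matrix.cons_val_two,
    Matrix.tail_cons, map_zero, zero_mul, add_zero, map_mul, map_pow, map_one]
  linear_combination rid4 (C t) (C t⁻¹) (X 0) hC
open MvPolynomial in
lemma curve_eq (v : BinVec ![1,4,4,3,2])
    (h1 : toPoly (v 1) = MvPolynomial.X 0 ^ 2 * MvPolynomial.X 1 ^ 2)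
    (h2 : toPoly (v 2) = MvPolynomial.X 0 ^ 2 * (MvPolynomial.X 1 - MvPolynomial.X 0) ^ 2)
    (h3 : toPoly (v 3) = MvPolynomial.X 0 * MvPolynomial.X 1 *
      (MvPolynomial.X 1 - MvPolynomial.X 0))
    (h4 : toPoly (v 4) = MvPolynomial.X 0 ^ 2)
    (d t : ℂ) (ht : t ≠ 0) :
    curveVec (v 0 0) (v 0 1) d t
      = t^6 • Gact (![fun _ => 1, fun _ => 1, fun _ => 2, fun _ => 3, fun _ => 4] : Fin 5 → Fin 1 → ℤ)
          ![1,4,4,3,2]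
          ((fun _ => (Units.mk0 t ht)⁻¹), upperSL (Units.mk0 t ht)⁻¹ (d * t⁻¹)) v := by
  set u : ℂˣ := (Units.mk0 t ht)⁻¹ with hu
  set g : SL2 := upperSL u (d * t⁻¹) with hg
  have e00 : ((g : Matrix (Fin 2) (Fin 2) ℂ)) 0 0 = t⁻¹ := rfl
  have e10 : ((g : Matrix (Fin 2) (Fin 2) ℂ)) 1 0 = 0 := rfl
  have e01 : ((g : Matrix (Fin 2) (Fin 2) ℂ)) 0 1 = d * t⁻¹ := rfl
  have e11 : ((g : Matrix (Fin 2) (Fin 2) ℂ)) 1 1 = t := rfl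
  have hsub : ∀ j : Fin 2, subst g (X j)
      = C ((g : Matrix (Fin 2) (Fin 2) ℂ) 0 j) * X 0
        + C ((g : Matrix (Fin 2) (Fin 2) ℂ) 1 j) * X 1 := subst_X g
  have hsub0 : subst g (X 0) = C t⁻¹ * X 0 + C 0 * X 1 := by rw [hsub 0, e00, e10]
  have hsub1 : subst g (X 1) = C (d*t⁻¹) * X 0 + C t * X 1 := by rw [hsub 1, e01, e11]
  have huv : (u : ℂ) = t⁻¹ := rfl
  funext i
  fin_cases i
  · -- component 0
    funext j
    change Fin (1+1) at j
    show (![t^4*(v 0 0 + v 0 1*d), (v 0 1)*t^6] : Fin 2 → ℂ) j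
      = t^6 * ofPoly 1 (C (charVal (fun _ : Fin 1 => (1:ℤ)) (fun _ => u)) * subst g (toPoly (v 0))) j
    have hch : charVal (fun _ : Fin 1 => (1:ℤ)) (fun _ => u) = t⁻¹ := by
      rw [charVal_one_apply, huv]; norm_num
    rw [hch, ← ofPoly_C_mul, show toPoly (v 0) = toPoly (n := 1) (v 0) from rfl, toPoly_one (v 0)]
    erw [show subst g (C (v 0 0) * X 0 + C (v 0 1) * X 1)
        = C (v 0 0) * (C t⁻¹ * X 0 + C 0 * X 1) + C (v 0 1) * (C (d*t⁻¹) * X 0 + C t * X 1) by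
      simp only [subst, map_add, map_mul, aeval_X, aeval_C, MvPolynomial.algebraMap_eq]
      rw [show ((g : Matrix (Fin 2) (Fin 2) ℂ)) 0 0 = t⁻¹ from rfl,
        show ((g : Matrix (Fin 2) (Fin 2) ℂ)) 1 0 = 0 from rfl,
        show ((g : Matrix (Fin 2) (Fin 2) ℂ)) 0 1 = d * t⁻¹ from rfl,
        show ((g : Matrix (Fin 2) (Fin 2) ℂ)) 1 1 = t from rfl]
      simp [map_mul]]
    rw [comp0_key (v 0 0) (v 0 1) d t ht, ofPoly_toPoly]
  · -- component 1
    funext j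
    change Fin (4+1) at j
    show (![t*d^2, 2*d*t^3, t^5, 0, 0] : Fin 5 → ℂ) j
      = t^6 * ofPoly 4 (C (charVal (fun _ : Fin 1 => (1:ℤ)) (fun _ => u)) * subst g (toPoly (v 1))) j
    have hch : charVal (fun _ : Fin 1 => (1:ℤ)) (fun _ => u) = t⁻¹ := by
      rw [charVal_one_apply, huv]; norm_num
    rw [hch, ← ofPoly_C_mul, h1]
    rw [show subst g (X 0 ^ 2 * X 1 ^ 2) = (subst g (X 0))^2 * (subst g (X 1))^2 by
      simp only [subst, map_mul, map_pow]]
    rw [hsub0, hsub1, comp1_key d t ht, ofPoly_toPoly]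
  · -- component 2
    funext j
    change Fin (4+1) at j
    show (![(d-1)^2, 2*(d-1)*t^2, t^4, 0, 0] : Fin 5 → ℂ) j
      = t^6 * ofPoly 4 (C (charVal (fun _ : Fin 1 => (2:ℤ)) (fun _ => u)) * subst g (toPoly (v 2))) j
    have hch : charVal (fun _ : Fin 1 => (2:ℤ)) (fun _ => u) = (t⁻¹)^2 := by
      rw [charVal_one_apply, huv]; simp [zpow_ofNat]
    rw [hch, ← ofPoly_C_mul, h2]
    rw [show subst g (X 0 ^ 2 * (X 1 - X 0) ^ 2)
        = (subst g (X 0))^2 * (subst g (X 1) - subst g (X 0))^2 by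
      simp only [subst, map_mul, map_pow, map_sub]]
    rw [hsub0, hsub1, comp2_key d t ht, ofPoly_toPoly]
  · -- component 3
    funext j
    change Fin (3+1) at j
    show (![d*(d-1), (2*d-1)*t^2, t^4, 0] : Fin 4 → ℂ) j
      = t^6 * ofPoly 3 (C (charVal (fun _ : Fin 1 => (3:ℤ)) (fun _ => u)) * subst g (toPoly (v 3))) j
    have hch : charVal (fun _ : Fin 1 => (3:ℤ)) (fun _ => u) = (t⁻¹)^3 := by
      rw [charVal_one_apply, huv]; simp [zpow_ofNat]
    rw [hch, ← ofPoly_C_mul, h3]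
    rw [show subst g (X 0 * X 1 * (X 1 - X 0))
        = (subst g (X 0)) * (subst g (X 1)) * (subst g (X 1) - subst g (X 0)) by
      simp only [subst, map_mul, map_sub]]
    rw [hsub0, hsub1, comp3_key d t ht, ofPoly_toPoly]
  · -- component 4
    funext j
    change Fin (2+1) at j
    show (![(1:ℂ), 0, 0] : Fin 3 → ℂ) j
      = t^6 * ofPoly 2 (C (charVal (fun _ : Fin 1 => (4:ℤ)) (fun _ => u)) * subst g (toPoly (v 4))) j
    have hch : charVal (fun _ : Fin 1 => (4:ℤ)) (fun _ => u) = (t⁻¹)^4 := by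
      rw [charVal_one_apply, huv]; simp [zpow_ofNat]
    rw [hch, ← ofPoly_C_mul, h4]
    rw [show subst g (X 0 ^ 2) = (subst g (X 0))^2 by
      simp only [subst, map_pow]]
    rw [hsub0, comp4_key t ht, ofPoly_toPoly]
open MvPolynomial in
lemma Gact_Wd_comp2 (d : ℂ) (τ : Fin 1 → ℂˣ) (g : SL2) :
    Gact (![fun _ => 1, fun _ => 1, fun _ => 2, fun _ => 3, fun _ => 4] : Fin 5 → Fin 1 → ℤ)
      ![1,4,4,3,2] (τ, g) (Wd d) 2
      = ![((τ 0 : ℂ))^2*(d-1)^2*((g : Matrix (Fin 2) (Fin 2) ℂ) 0 0)^4,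
          4*(((τ 0 : ℂ))^2*(d-1)^2)*((g : Matrix (Fin 2) (Fin 2) ℂ) 0 0)^3*((g : Matrix (Fin 2) (Fin 2) ℂ) 1 0),
          6*(((τ 0 : ℂ))^2*(d-1)^2)*((g : Matrix (Fin 2) (Fin 2) ℂ) 0 0)^2*((g : Matrix (Fin 2) (Fin 2) ℂ) 1 0)^2,
          4*(((τ 0 : ℂ))^2*(d-1)^2)*((g : Matrix (Fin 2) (Fin 2) ℂ) 0 0)*((g : Matrix (Fin 2) (Fin 2) ℂ) 1 0)^3,
          (((τ 0 : ℂ))^2*(d-1)^2)*((g : Matrix (Fin 2) (Fin 2) ℂ) 1 0)^4] := by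
  set T : ℂ := ((τ 0 : ℂ)) with hT
  show ofPoly 4 (C (charVal (fun _ : Fin 1 => (2:ℤ)) τ) * subst g (toPoly (Wd d 2))) = _
  have hch : charVal (fun _ : Fin 1 => (2:ℤ)) τ = T^2 := by
    rw [charVal_one_apply]; simp [zpow_ofNat]; rfl
  have htp : toPoly (Wd d 2) = C ((d-1)^2) * X 0 ^ 4 := by
    rw [show toPoly (Wd d 2) = toPoly (n := 4) ![(d-1)^2,0,0,0,0] from rfl, toPoly_four]
    simp
  rw [hch, htp]
  rw [show subst g (C ((d-1)^2) * X 0 ^ 4)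
      = C ((d-1)^2) * ((C ((g : Matrix (Fin 2) (Fin 2) ℂ) 0 0) * X 0
          + C ((g : Matrix (Fin 2) (Fin 2) ℂ) 1 0) * X 1))^4 by
    simp only [subst, map_mul, map_pow, aeval_C, MvPolynomial.algebraMap_eq, aeval_X]]
  rw [← mul_assoc, ← map_mul, pow_four_toPoly, ofPoly_toPoly]

open MvPolynomial in
lemma Gact_Wd_comp3 (d : ℂ) (τ : Fin 1 → ℂˣ) (g : SL2) :
    Gact (![fun _ => 1, fun _ => 1, fun _ => 2, fun _ => 3, fun _ => 4] : Fin 5 → Fin 1 → ℤ)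
      ![1,4,4,3,2] (τ, g) (Wd d) 3
      = ![((τ 0 : ℂ))^3*(d*(d-1))*((g : Matrix (Fin 2) (Fin 2) ℂ) 0 0)^3,
          3*(((τ 0 : ℂ))^3*(d*(d-1)))*((g : Matrix (Fin 2) (Fin 2) ℂ) 0 0)^2*((g : Matrix (Fin 2) (Fin 2) ℂ) 1 0),
          3*(((τ 0 : ℂ))^3*(d*(d-1)))*((g : Matrix (Fin 2) (Fin 2) ℂ) 0 0)*((g : Matrix (Fin 2) (Fin 2) ℂ) 1 0)^2,
          (((τ 0 : ℂ))^3*(d*(d-1)))*((g : Matrix (Fin 2) (Fin 2) ℂ) 1 0)^3] := by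
  set T : ℂ := ((τ 0 : ℂ)) with hT
  show ofPoly 3 (C (charVal (fun _ : Fin 1 => (3:ℤ)) τ) * subst g (toPoly (Wd d 3))) = _
  have hch : charVal (fun _ : Fin 1 => (3:ℤ)) τ = T^3 := by
    rw [charVal_one_apply]; simp [zpow_ofNat]; rfl
  have htp : toPoly (Wd d 3) = C (d*(d-1)) * X 0 ^ 3 := by
    rw [show toPoly (Wd d 3) = toPoly (n := 3) ![d*(d-1),0,0,0] from rfl, toPoly_three]
    simp
  rw [hch, htp]
  rw [show subst g (C (d*(d-1)) * X 0 ^ 3)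
      = C (d*(d-1)) * ((C ((g : Matrix (Fin 2) (Fin 2) ℂ) 0 0) * X 0
          + C ((g : Matrix (Fin 2) (Fin 2) ℂ) 1 0) * X 1))^3 by
    simp only [subst, map_mul, map_pow, aeval_C, MvPolynomial.algebraMap_eq, aeval_X]]
  rw [← mul_assoc, ← map_mul, pow_three_toPoly, ofPoly_toPoly]

open MvPolynomial in
lemma Gact_Wd_comp4 (d : ℂ) (τ : Fin 1 → ℂˣ) (g : SL2) :
    Gact (![fun _ => 1, fun _ => 1, fun _ => 2, fun _ => 3, fun _ => 4] : Fin 5 → Fin 1 → ℤ)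
      ![1,4,4,3,2] (τ, g) (Wd d) 4
      = ![((τ 0 : ℂ))^4*((g : Matrix (Fin 2) (Fin 2) ℂ) 0 0)^2,
          2*((τ 0 : ℂ))^4*((g : Matrix (Fin 2) (Fin 2) ℂ) 0 0)*((g : Matrix (Fin 2) (Fin 2) ℂ) 1 0),
          ((τ 0 : ℂ))^4*((g : Matrix (Fin 2) (Fin 2) ℂ) 1 0)^2] := by
  set T : ℂ := ((τ 0 : ℂ)) with hT
  show ofPoly 2 (C (charVal (fun _ : Fin 1 => (4:ℤ)) τ) * subst g (toPoly (Wd d 4))) = _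
  have hch : charVal (fun _ : Fin 1 => (4:ℤ)) τ = T^4 := by
    rw [charVal_one_apply]; simp [zpow_ofNat]; rfl
  have htp : toPoly (Wd d 4) = C 1 * X 0 ^ 2 := by
    rw [show toPoly (Wd d 4) = toPoly (n := 2) ![1,0,0] from rfl, toPoly_two]
    simp
  rw [hch, htp]
  rw [show subst g (C 1 * X 0 ^ 2)
      = C 1 * ((C ((g : Matrix (Fin 2) (Fin 2) ℂ) 0 0) * X 0
          + C ((g : Matrix (Fin 2) (Fin 2) ℂ) 1 0) * X 1))^2 by
    simp only [subst, map_mul, map_pow, aeval_C, MvPolynomial.algebraMap_eq, aeval_X]]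
  rw [← mul_assoc, ← map_mul, pow_two_toPoly, ofPoly_toPoly]
  congr 1 <;> ring_nf

lemma orbit_invariant (d d' : ℂ) (hd0 : d ≠ 0) (hd1 : d - 1 ≠ 0)
    (τ : Fin 1 → ℂˣ) (g : SL2) (A : ℂˣ)
    (heq : A • Gact (![fun _ => 1, fun _ => 1, fun _ => 2, fun _ => 3, fun _ => 4] : Fin 5 → Fin 1 → ℤ)
      ![1,4,4,3,2] (τ, g) (Wd d) = Wd d') : d'^2 = d^2 := by
  set T : ℂ := ((τ 0 : ℂ)) with hT
  set a : ℂ := (g : Matrix (Fin 2) (Fin 2) ℂ) 0 0 with ha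
  have e2 : (A : ℂ) * (T^2*(d-1)^2*a^4) = (d'-1)^2 := by
    have h := congrFun (congrFun heq 2) 0
    rw [show Wd d' 2 0 = (d'-1)^2 from rfl] at h
    simp only [Pi.smul_apply, Units.smul_def, smul_eq_mul] at h
    rw [Gact_Wd_comp2] at h
    simpa using h
  have e3 : (A : ℂ) * (T^3*(d*(d-1))*a^3) = d'*(d'-1) := by
    have h := congrFun (congrFun heq 3) 0
    rw [show Wd d' 3 0 = d'*(d'-1) from rfl] at h
    simp only [Pi.smul_apply, Units.smul_def, smul_eq_mul] at h
    rw [Gact_Wd_comp3] at h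
    simpa using h
  have e4 : (A : ℂ) * (T^4*a^2) = 1 := by
    have h := congrFun (congrFun heq 4) 0
    rw [show Wd d' 4 0 = 1 from rfl] at h
    simp only [Pi.smul_apply, Units.smul_def, smul_eq_mul] at h
    rw [Gact_Wd_comp4] at h
    simpa using h
  have hA : (A : ℂ) ≠ 0 := Units.ne_zero A
  have hTne : T ≠ 0 := Units.ne_zero (τ 0)
  have hane : a ≠ 0 := by
    intro h0
    rw [h0] at e4
    simp at e4
  have hd'1 : (d' - 1)^2 ≠ 0 := by
    rw [← e2]
    exact mul_ne_zero hA (mul_ne_zero (mul_ne_zero (pow_ne_zero _ hTne)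
      (pow_ne_zero _ hd1)) (pow_ne_zero _ hane))
  have key : d'^2 * (d'-1)^2 = d^2 * (d'-1)^2 := by
    linear_combination (-(d'*(d'-1) + (A : ℂ) * (T^3*(d*(d-1))*a^3))) * e3
      + d^2 * ((A:ℂ) * (T^2*(d-1)^2*a^4)) * e4 + d^2 * e2
  exact mul_right_cancel₀ hd'1 key
open Polynomial in
lemma curveVec_poly (c0 c1 d : ℂ) (ij : Σ i : Fin 5, Fin (![1,4,4,3,2] i + 1)) :
    ∃ P : Polynomial ℂ, ∀ t, curveVec c0 c1 d t ij.1 ij.2 = Polynomial.eval t P := by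
  obtain ⟨i, j⟩ := ij
  fin_cases i <;> fin_cases j
  · exact ⟨C (c0+c1*d) * X^4, fun t => by show t^4*(c0+c1*d) = _; simp; try ring⟩
  · exact ⟨C c1 * X^6, fun t => by show c1*t^6 = _; simp; try ring⟩
  · exact ⟨C (d^2) * X, fun t => by show t*d^2 = _; simp; try ring⟩
  · exact ⟨C (2*d) * X^3, fun t => by show 2*d*t^3 = _; simp; try ring⟩
  · exact ⟨X^5, fun t => by show t^5 = _; simp⟩
  · exact ⟨0, fun t => by show (0:ℂ) = _; simp⟩
  · exact ⟨0, fun t => by show (0:ℂ) = _; simp⟩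
  · exact ⟨C ((d-1)^2), fun t => by show (d-1)^2 = _; simp⟩
  · exact ⟨C (2*(d-1)) * X^2, fun t => by show 2*(d-1)*t^2 = _; simp; try ring⟩
  · exact ⟨X^4, fun t => by show t^4 = _; simp⟩
  · exact ⟨0, fun t => by show (0:ℂ) = _; simp⟩
  · exact ⟨0, fun t => by show (0:ℂ) = _; simp⟩
  · exact ⟨C (d*(d-1)), fun t => by show d*(d-1) = _; simp⟩
  · exact ⟨C (2*d-1) * X^2, fun t => by show (2*d-1)*t^2 = _; simp; try ring⟩
  · exact ⟨X^4, fun t => by show t^4 = _; simp⟩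
  · exact ⟨0, fun t => by show (0:ℂ) = _; simp⟩
  · exact ⟨C 1, fun t => by show (1:ℂ) = _; simp⟩
  · exact ⟨0, fun t => by show (0:ℂ) = _; simp⟩
  · exact ⟨0, fun t => by show (0:ℂ) = _; simp⟩
set_option maxHeartbeats 1000000 in
/-- **Example 1.** For `k = 1`, `V = V_{1,1} ⊕ V_{1,4} ⊕ V_{2,4} ⊕ V_{3,3} ⊕ V_{4,2}`
and `v = (v₁, x²y², x²(y-x)², xy(y-x), x²)` with `v₁` any nonzero linear form, the
closure of `G⟨v⟩ ⊆ ℙ(V)` contains infinitely many `G`-orbits. -/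
theorem example_infinitely_many_orbits
    (v : BinVec ![1, 4, 4, 3, 2]) (h0 : v 0 ≠ 0)
    (h1 : toPoly (v 1) = MvPolynomial.X 0 ^ 2 * MvPolynomial.X 1 ^ 2)
    (h2 : toPoly (v 2) = MvPolynomial.X 0 ^ 2 * (MvPolynomial.X 1 - MvPolynomial.X 0) ^ 2)
    (h3 : toPoly (v 3) = MvPolynomial.X 0 * MvPolynomial.X 1 *
      (MvPolynomial.X 1 - MvPolynomial.X 0))
    (h4 : toPoly (v 4) = MvPolynomial.X 0 ^ 2) :
    {o : Set (Projectivization ℂ (BinVec ![1, 4, 4, 3, 2])) |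
      ∃ q ∈ pClosure
        (pOrbit (![fun _ => 1, fun _ => 1, fun _ => 2, fun _ => 3, fun _ => 4] : Fin 5 → Fin 1 → ℤ)
          ![1, 4, 4, 3, 2] v),
        o = pOrbit (![fun _ => 1, fun _ => 1, fun _ => 2, fun _ => 3, fun _ => 4] : Fin 5 → Fin 1 → ℤ)
          ![1, 4, 4, 3, 2] q.rep}.Infinite := by
  classical
  refine Set.infinite_of_injective_forall_mem
    (f := fun m : ℕ =>
      pOrbit (![fun _ => 1, fun _ => 1, fun _ => 2, fun _ => 3, fun _ => 4] : Fin 5 → Fin 1 → ℤ)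
        ![1, 4, 4, 3, 2] (Wd ((m:ℂ)+2))) ?_ ?_
  · -- injectivity
    intro m m' h
    simp only at h
    set d : ℂ := (m:ℂ)+2 with hd
    set d' : ℂ := (m':ℂ)+2 with hd'
    have hd0 : d ≠ 0 := by
      intro hz
      have h' : ((m+2:ℕ):ℂ) = 0 := by push_cast; linear_combination hz
      have := Nat.cast_eq_zero.mp h'
      omega
    have hd1 : d - 1 ≠ 0 := by
      intro hz
      have h' : ((m+1:ℕ):ℂ) = 0 := by push_cast; linear_combination hz
      have := Nat.cast_eq_zero.mp h'
      omega
    have hwd' : Wd d' ≠ 0 := Wd_ne_zero d'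
    have hmem : Projectivization.mk ℂ (Wd d') hwd' ∈
        pOrbit (![fun _ => 1, fun _ => 1, fun _ => 2, fun _ => 3, fun _ => 4] : Fin 5 → Fin 1 → ℤ)
          ![1, 4, 4, 3, 2] (Wd d') :=
      mem_pOrbit_self _ _ (Wd d') hwd'
    rw [← h] at hmem
    obtain ⟨gp, hG, hmk⟩ := hmem
    obtain ⟨A, hA⟩ := (Projectivization.mk_eq_mk_iff ℂ _ _ hwd' hG).mp hmk
    obtain ⟨τ, g⟩ := gp
    have hsq : d'^2 = d^2 := orbit_invariant d d' hd0 hd1 τ g A hA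
    have hsum : d' + d ≠ 0 := by
      intro hz
      have h' : ((m'+m+4:ℕ):ℂ) = 0 := by push_cast; linear_combination hz
      have := Nat.cast_eq_zero.mp h'
      omega
    have hdiff : d' - d = 0 := by
      have h2' : (d'-d)*(d'+d) = 0 := by linear_combination hsq
      rcases mul_eq_zero.mp h2' with h' | h'
      · exact h'
      · exact absurd h' hsum
    have heq : d' = d := by linear_combination hdiff
    have heq2 : ((m':ℕ):ℂ) = ((m:ℕ):ℂ) := by
      rw [hd, hd'] at heq
      linear_combination heq
    exact (Nat.cast_inj.mp heq2).symm
  · -- membership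
    intro m
    set d : ℂ := (m:ℂ)+2 with hd
    refine ⟨Projectivization.mk ℂ (Wd d) (Wd_ne_zero d), ?_, ?_⟩
    · refine mem_pClosure_of_curve _ _ v (Wd d) (Wd_ne_zero d)
        (curveVec (v 0 0) (v 0 1) d) (curveVec_poly (v 0 0) (v 0 1) d)
        (curveVec_zero (v 0 0) (v 0 1) d) (curveVec_ne_zero (v 0 0) (v 0 1) d) ?_
      intro t ht
      exact ⟨((fun _ => (Units.mk0 t ht)⁻¹), upperSL (Units.mk0 t ht)⁻¹ (d * t⁻¹)), t^6,
        pow_ne_zero 6 ht, curve_eq v h1 h2 h3 h4 d t ht⟩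
    · obtain ⟨A, hA⟩ := (Projectivization.mk_eq_mk_iff ℂ
        (Projectivization.mk ℂ (Wd d) (Wd_ne_zero d)).rep (Wd d)
        (Projectivization.mk ℂ (Wd d) (Wd_ne_zero d)).rep_nonzero (Wd_ne_zero d)).mp
        (by rw [Projectivization.mk_rep])
      have hres : pOrbit (![fun _ => 1, fun _ => 1, fun _ => 2, fun _ => 3, fun _ => 4] : Fin 5 → Fin 1 → ℤ)
          ![1, 4, 4, 3, 2] (Projectivization.mk ℂ (Wd d) (Wd_ne_zero d)).rep
          = pOrbit (![fun _ => 1, fun _ => 1, fun _ => 2, fun _ => 3, fun _ => 4] : Fin 5 → Fin 1 → ℤ)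
          ![1, 4, 4, 3, 2] (Wd d) := by
        rw [← hA, Units.smul_def, pOrbit_smul _ _ (Wd d) (A:ℂ) (Units.ne_zero A)]
      exact hres.symm
end
end

section
/- Let $k=1$ and $G=\mathbb{C}^{\times}\times SL_2(\mathbb{C})$, let $V=V_{1,1}\oplus V_{1,4}\oplus V_{2,4}\oplus V_{3,3}\oplus V_{4,2}$, and for $d\in\mathbb{C}$ set $w(d)=\langle(0,\;0,\;(d+1)^2x^4,\;d(d+1)x^3,\;x^2)\rangle\in\mathbb{P}(V)$. Then for every $d_1\in\mathbb{C}$ the set $\{d_2\in\mathbb{C}:w(d_2)\in G\,w(d_1)\}$ is finite; consequently the family $\{w(d):d\in\mathbb{C}\}$ meets infinitely many distinct $G$-orbits. -/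
open scoped BigOperators

noncomputable section

namespace ExampleAux

open MvPolynomial

lemma monExp_inj {n j1 j2 : ℕ} (h : monExp n j1 = monExp n j2) : j1 = j2 := by
  have := DFunLike.congr_fun h 1
  simpa [monExp] using this

lemma ofPoly_toPoly {n : ℕ} (c : Fin (n + 1) → ℂ) : ofPoly n (toPoly c) = c := by
  funext j
  simp only [ofPoly, toPoly, MvPolynomial.coeff_sum, MvPolynomial.coeff_monomial]
  rw [Finset.sum_eq_single j]
  · simp
  · intro b _ hb
    rw [if_neg]
    intro h
    exact hb (Fin.ext (monExp_inj h))
  · intro h; exact absurd (Finset.mem_univ j) h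

lemma term_eq_monomial (κ μ : ℂ) (m i : ℕ) :
    (MvPolynomial.C κ * MvPolynomial.X 0 : MvPolynomial (Fin 2) ℂ) ^ i *
      (MvPolynomial.C μ * MvPolynomial.X 1) ^ (m - i) * (m.choose i : MvPolynomial (Fin 2) ℂ)
    = MvPolynomial.monomial (Finsupp.single (0 : Fin 2) i + Finsupp.single (1 : Fin 2) (m - i))
        (κ ^ i * μ ^ (m - i) * (m.choose i : ℂ)) := by
  rw [mul_pow, mul_pow, X_pow_eq_monomial, X_pow_eq_monomial, ← C_pow, ← C_pow,
    C_mul_monomial, C_mul_monomial, monomial_mul,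
    show ((m.choose i : ℕ) : MvPolynomial (Fin 2) ℂ) = C ((m.choose i : ℕ) : ℂ) by simp,
    mul_comm, C_mul_monomial]
  congr 1
  ring

lemma coeff_pow_lin (κ μ : ℂ) (m : ℕ) (j : Fin (m + 1)) :
    MvPolynomial.coeff (monExp m (j : ℕ))
      ((MvPolynomial.C κ * MvPolynomial.X 0 + MvPolynomial.C μ * MvPolynomial.X 1 :
        MvPolynomial (Fin 2) ℂ) ^ m)
    = (m.choose (j : ℕ) : ℂ) * κ ^ (m - (j : ℕ)) * μ ^ (j : ℕ) := by
  have hj : (j : ℕ) ≤ m := Nat.lt_succ_iff.mp j.isLt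
  rw [add_pow, MvPolynomial.coeff_sum]
  rw [Finset.sum_eq_single (m - (j : ℕ))]
  · rw [term_eq_monomial, MvPolynomial.coeff_monomial, if_pos (by rw [Nat.sub_sub_self hj]; rfl)]
    rw [Nat.sub_sub_self hj, Nat.choose_symm hj]
    ring
  · intro b _ hb
    rw [term_eq_monomial, MvPolynomial.coeff_monomial, if_neg]
    intro h
    have := DFunLike.congr_fun h 0
    simp [monExp] at this
    exact hb this
  · intro h
    exact absurd (Finset.mem_range.mpr (Nat.lt_succ_of_le (Nat.sub_le m _))) h

lemma gact_coeff {k s : ℕ} (χ : Fin s → Fin k → ℤ) (n : Fin s → ℕ)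
    (g : (Fin k → ℂˣ) × SL2) (v : BinVec n) (i : Fin s) (a : ℂ)
    (h : toPoly (v i) = MvPolynomial.C a * MvPolynomial.X 0 ^ (n i)) (j : Fin (n i + 1)) :
    Gact χ n g v i j =
      charVal (χ i) g.1 * a * ((n i).choose (j : ℕ) : ℂ) *
        ((g.2 : Matrix (Fin 2) (Fin 2) ℂ) 0 0) ^ (n i - (j : ℕ)) *
        ((g.2 : Matrix (Fin 2) (Fin 2) ℂ) 1 0) ^ (j : ℕ) := by
  have hsub : subst g.2 (toPoly (v i)) =
      MvPolynomial.C a *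
        (MvPolynomial.C ((g.2 : Matrix (Fin 2) (Fin 2) ℂ) 0 0) * MvPolynomial.X 0 +
          MvPolynomial.C ((g.2 : Matrix (Fin 2) (Fin 2) ℂ) 1 0) * MvPolynomial.X 1) ^ (n i) := by
    rw [h, subst]
    simp [map_mul, map_pow, MvPolynomial.algebraMap_eq]
  show ofPoly (n i) (MvPolynomial.C (charVal (χ i) g.1) * subst g.2 (toPoly (v i))) j = _
  rw [hsub, ofPoly, ← mul_assoc, ← MvPolynomial.C_mul, MvPolynomial.coeff_C_mul, coeff_pow_lin]
  ring

lemma coeff_CX0pow (a : ℂ) (m : ℕ) (j : Fin (m + 1)) :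
    MvPolynomial.coeff (monExp m (j : ℕ)) (MvPolynomial.C a * MvPolynomial.X 0 ^ m :
      MvPolynomial (Fin 2) ℂ) = if (j : ℕ) = 0 then a else 0 := by
  have h : (MvPolynomial.C a * MvPolynomial.X 0 ^ m : MvPolynomial (Fin 2) ℂ)
      = MvPolynomial.C a * (MvPolynomial.C 1 * MvPolynomial.X 0 +
          MvPolynomial.C 0 * MvPolynomial.X 1) ^ m := by
    simp
  rw [h, MvPolynomial.coeff_C_mul, coeff_pow_lin]
  rcases Nat.eq_zero_or_pos (j : ℕ) with h0 | h0
  · simp [h0]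
  · simp [zero_pow (Nat.pos_iff_ne_zero.mp h0), Nat.pos_iff_ne_zero.mp h0]

lemma subst_one (f : MvPolynomial (Fin 2) ℂ) : subst 1 f = f := by
  rw [subst]
  have h : (fun j : Fin 2 =>
      MvPolynomial.C (((1 : SL2) : Matrix (Fin 2) (Fin 2) ℂ) 0 j) * MvPolynomial.X 0 +
      MvPolynomial.C (((1 : SL2) : Matrix (Fin 2) (Fin 2) ℂ) 1 j) * MvPolynomial.X 1)
      = (MvPolynomial.X : Fin 2 → MvPolynomial (Fin 2) ℂ) := by
    funext j
    fin_cases j <;> simp [Matrix.one_apply]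
  rw [h, MvPolynomial.aeval_X_left_apply]

lemma Gact_one {k s : ℕ} (χ : Fin s → Fin k → ℤ) (n : Fin s → ℕ) (v : BinVec n) :
    Gact χ n ((fun _ => 1 : Fin k → ℂˣ), (1 : SL2)) v = v := by
  funext i
  show ofPoly (n i) (MvPolynomial.C (charVal (χ i) fun _ => 1) * subst 1 (toPoly (v i))) = v i
  have hc : charVal (χ i) (fun _ => (1 : ℂˣ)) = 1 := by
    simp [charVal]
  rw [hc, subst_one, map_one, one_mul, ofPoly_toPoly]

lemma ofPoly_CX0pow_zero (a : ℂ) (m : ℕ) :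
    ofPoly m (MvPolynomial.C a * MvPolynomial.X 0 ^ m) 0 = a := by
  have h := coeff_CX0pow a m 0
  simpa [ofPoly] using h

end ExampleAux

/-- **Example 1, final computation.** For
`w(d) = ⟨(0, 0, (d+1)²x⁴, d(d+1)x³, x²)⟩ ∈ ℙ(V)`: for every `d₁` only finitely many `d₂`
have `w(d₂) ∈ G·w(d₁)`; consequently the family `{w(d)}` meets infinitely many distinct
`G`-orbits. -/
theorem example_standard_limits_in_infinitely_many_orbits
    (w : ℂ → BinVec ![1, 4, 4, 3, 2])
    (hw : ∀ d : ℂ, toPoly (w d 0) = 0 ∧ toPoly (w d 1) = 0 ∧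
      toPoly (w d 2) = MvPolynomial.C ((d + 1) ^ 2) * MvPolynomial.X 0 ^ 4 ∧
      toPoly (w d 3) = MvPolynomial.C (d * (d + 1)) * MvPolynomial.X 0 ^ 3 ∧
      toPoly (w d 4) = MvPolynomial.X 0 ^ 2) :
    (∀ d1 : ℂ,
      {d2 : ℂ | ∃ (g : (Fin 1 → ℂˣ) × SL2) (c : ℂˣ),
        Gact (![fun _ => 1, fun _ => 1, fun _ => 2, fun _ => 3, fun _ => 4] : Fin 5 → Fin 1 → ℤ)
          ![1, 4, 4, 3, 2] g (w d1) = (c : ℂ) • w d2}.Finite) ∧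
    {o : Set (Projectivization ℂ (BinVec ![1, 4, 4, 3, 2])) |
      ∃ d : ℂ, o = pOrbit (![fun _ => 1, fun _ => 1, fun _ => 2, fun _ => 3, fun _ => 4] : Fin 5 → Fin 1 → ℤ)
        ![1, 4, 4, 3, 2] (w d)}.Infinite := by
  classical
  have part1 : ∀ d1 : ℂ, {d2 : ℂ | ∃ (g : (Fin 1 → ℂˣ) × SL2) (c : ℂˣ),
      Gact (![fun _ => 1, fun _ => 1, fun _ => 2, fun _ => 3, fun _ => 4] : Fin 5 → Fin 1 → ℤ)
        ![1, 4, 4, 3, 2] g (w d1) = (c : ℂ) • w d2}.Finite := by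
    intro d1
    apply Set.Finite.subset
      (((Set.finite_singleton (-1 : ℂ)).insert (-d1)).insert d1)
    rintro d2 ⟨g, c, H⟩
    set τ : ℂ := ((g.1 0 : ℂˣ) : ℂ) with hτdef
    have hτ : τ ≠ 0 := Units.ne_zero _
    set κ : ℂ := (g.2 : Matrix (Fin 2) (Fin 2) ℂ) 0 0 with hκdef
    have hcne : (c : ℂ) ≠ 0 := Units.ne_zero c
    -- coefficients of w d2 at (i, 0)
    have hv2 : w d2 2 0 = (d2 + 1) ^ 2 := by
      have h := congr_fun (ExampleAux.ofPoly_toPoly (w d2 2)) 0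
      rw [(hw d2).2.2.1] at h
      rw [← h]
      exact ExampleAux.ofPoly_CX0pow_zero ((d2 + 1) ^ 2) 4
    have hv3 : w d2 3 0 = d2 * (d2 + 1) := by
      have h := congr_fun (ExampleAux.ofPoly_toPoly (w d2 3)) 0
      rw [(hw d2).2.2.2.1] at h
      rw [← h]
      exact ExampleAux.ofPoly_CX0pow_zero (d2 * (d2 + 1)) 3
    have hv4 : w d2 4 0 = 1 := by
      have h := congr_fun (ExampleAux.ofPoly_toPoly (w d2 4)) 0
      rw [show toPoly (w d2 4) = MvPolynomial.C 1 * MvPolynomial.X 0 ^ 2 by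
        rw [(hw d2).2.2.2.2, map_one, one_mul]] at h
      rw [← h]
      exact ExampleAux.ofPoly_CX0pow_zero (1 : ℂ) 2
    -- the three scalar equations
    have E2 := congr_fun (congr_fun H 2) 0
    have E3 := congr_fun (congr_fun H 3) 0
    have E4 := congr_fun (congr_fun H 4) 0
    rw [ExampleAux.gact_coeff _ _ g (w d1) 2 ((d1 + 1) ^ 2) (hw d1).2.2.1] at E2
    rw [ExampleAux.gact_coeff _ _ g (w d1) 3 (d1 * (d1 + 1)) (hw d1).2.2.2.1] at E3
    rw [ExampleAux.gact_coeff _ _ g (w d1) 4 (1 : ℂ)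
      (by rw [(hw d1).2.2.2.2, map_one, one_mul]; rfl)] at E4
    have hch : ∀ i : Fin 5, ∀ m : ℕ, (![fun _ => 1, fun _ => 1, fun _ => 2, fun _ => 3, fun _ => 4] : Fin 5 → Fin 1 → ℤ) i = (fun _ => (m:ℤ)) → charVal ((![fun _ => 1, fun _ => 1, fun _ => 2, fun _ => 3, fun _ => 4] : Fin 5 → Fin 1 → ℤ) i) g.1 = τ ^ m := by
      intro i m him
      rw [him]
      simp [charVal, zpow_natCast, hτdef]
    rw [hch 2 2 rfl] at E2
    rw [hch 3 3 rfl] at E3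
    rw [hch 4 4 rfl] at E4
    simp only [Pi.smul_apply, smul_eq_mul, hv2, hv3, hv4] at E2 E3 E4
    norm_num [show (![1, 4, 4, 3, 2] : Fin 5 → ℕ) 2 = 4 from rfl,
      show (![1, 4, 4, 3, 2] : Fin 5 → ℕ) 3 = 3 from rfl,
      show (![1, 4, 4, 3, 2] : Fin 5 → ℕ) 4 = 2 from rfl] at E2 E3 E4
    have key : (d2 + 1) ^ 2 * ((d1 - d2) * (d1 + d2)) * ((c : ℂ) ^ 2 * τ ^ 2) = 0 := by
      linear_combination (-((c:ℂ) * τ ^ 2 * d1 ^ 2)) * E2 +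
        (τ ^ 2 * (τ ^ 3 * d1 * (d1 + 1) * ((g.2 : Matrix (Fin 2) (Fin 2) ℂ) 0 0) ^ 3 +
          (c:ℂ) * (d2 * (d2 + 1)))) * E3 +
        (-(τ ^ 4 * d1 ^ 2 * (d1 + 1) ^ 2 * ((g.2 : Matrix (Fin 2) (Fin 2) ℂ) 0 0) ^ 4)) * E4
    have h0 : (d2 + 1) ^ 2 * ((d1 - d2) * (d1 + d2)) = 0 := by
      rcases mul_eq_zero.mp key with h | h
      · exact h
      · exact absurd h (mul_ne_zero (pow_ne_zero 2 hcne) (pow_ne_zero 2 hτ))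
    rcases mul_eq_zero.mp h0 with h | h
    · have hd : d2 = -1 := by
        have h1 : d2 + 1 = 0 := (pow_eq_zero_iff two_ne_zero).mp h
        linear_combination h1
      rw [hd]; simp
    · rcases mul_eq_zero.mp h with h | h
      · have hd : d2 = d1 := by linear_combination -h
        rw [hd]; simp
      · have hd : d2 = -d1 := by linear_combination h
        rw [hd]; simp
  have hv4all : ∀ d : ℂ, w d 4 0 = 1 := by
    intro d
    have h := congr_fun (ExampleAux.ofPoly_toPoly (w d 4)) 0
    rw [show toPoly (w d 4) = MvPolynomial.C 1 * MvPolynomial.X 0 ^ 2 by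
      rw [(hw d).2.2.2.2, map_one, one_mul]] at h
    rw [← h]
    exact ExampleAux.ofPoly_CX0pow_zero (1 : ℂ) 2
  refine ⟨part1, ?_⟩
  intro hfin
  haveI := hfin.to_subtype
  let f : ℂ → ↥{o : Set (Projectivization ℂ (BinVec ![1, 4, 4, 3, 2])) |
      ∃ d : ℂ, o = pOrbit (![fun _ => 1, fun _ => 1, fun _ => 2, fun _ => 3, fun _ => 4] : Fin 5 → Fin 1 → ℤ)
        ![1, 4, 4, 3, 2] (w d)} :=
    fun d => ⟨pOrbit _ _ (w d), ⟨d, rfl⟩⟩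
  obtain ⟨y, hy⟩ := Finite.exists_infinite_fiber f
  have hyInf : (f ⁻¹' {y}).Infinite := Set.infinite_coe_iff.mp hy
  obtain ⟨d1, hd1⟩ := hyInf.nonempty
  apply hyInf
  apply (part1 d1).subset
  intro d2 hd2
  have horb : pOrbit (![fun _ => 1, fun _ => 1, fun _ => 2, fun _ => 3, fun _ => 4] : Fin 5 → Fin 1 → ℤ)
      ![1, 4, 4, 3, 2] (w d2) = pOrbit (![fun _ => 1, fun _ => 1, fun _ => 2, fun _ => 3, fun _ => 4] : Fin 5 → Fin 1 → ℤ) ![1, 4, 4, 3, 2] (w d1) := by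
    have h1 : f d2 = f d1 := by
      rw [Set.mem_preimage, Set.mem_singleton_iff] at hd2 hd1
      rw [hd2, hd1]
    exact congrArg Subtype.val h1
  have hne : w d2 ≠ 0 := by
    intro h0
    have : (1 : ℂ) = 0 := by rw [← hv4all d2, h0]; rfl
    exact one_ne_zero this
  have hmk : Projectivization.mk ℂ (w d2) hne ∈
      pOrbit (![fun _ => 1, fun _ => 1, fun _ => 2, fun _ => 3, fun _ => 4] : Fin 5 → Fin 1 → ℤ)
        ![1, 4, 4, 3, 2] (w d2) := by
    refine ⟨((fun _ => 1), 1), by rw [ExampleAux.Gact_one]; exact hne, ?_⟩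
    rw [Projectivization.mk_eq_mk_iff]
    exact ⟨1, by rw [ExampleAux.Gact_one, one_smul]⟩
  rw [horb] at hmk
  obtain ⟨g, hgne, hgeq⟩ := hmk
  rw [Projectivization.mk_eq_mk_iff] at hgeq
  obtain ⟨a, ha⟩ := hgeq
  refine ⟨g, a⁻¹, ?_⟩
  rw [← ha]
  simp [Units.smul_def, smul_smul]
end
end

section
/- Let $v(d_1,R_1)$ and $v(d_2,R_2)$ be nonzero standard vectors such that some index $i\in I(R_1)$ has $n_i\geq 1$, and suppose $g\in G$ satisfies $g\cdot v(d_1,R_1)=v(d_2,R_2)$. Then $g\in B$, i.e., the $SL_2(\mathbb{C})$-component of $g$ is upper-triangular. Consequently, two standard vectors lying in the same $G$-orbit lie in the same $B$-orbit. -/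
open scoped BigOperators

noncomputable section

lemma monExp_zero (n : ℕ) : monExp n 0 = Finsupp.single (0 : Fin 2) n := by
  simp [monExp]

lemma monExp_self (n : ℕ) : monExp n n = Finsupp.single (1 : Fin 2) n := by
  simp [monExp]

lemma ofPoly_cxn (n : ℕ) (c : ℂ) (j : Fin (n + 1)) :
    ofPoly n (MvPolynomial.C c * MvPolynomial.X 0 ^ n) j
      = if (j : ℕ) = 0 then c else 0 := by
  rw [MvPolynomial.X_pow_eq_monomial, MvPolynomial.C_mul_monomial, mul_one]
  unfold ofPoly
  rw [MvPolynomial.coeff_monomial]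
  by_cases hj : (j : ℕ) = 0
  · simp [hj, monExp]
  · rw [if_neg hj, if_neg]
    intro h
    have := DFunLike.congr_fun h (1 : Fin 2)
    simp [monExp, Finsupp.single_apply] at this
    exact hj this.symm

lemma toPoly_ofPoly_cxn (n : ℕ) (c : ℂ) :
    toPoly (ofPoly n (MvPolynomial.C c * MvPolynomial.X 0 ^ n))
      = MvPolynomial.C c * MvPolynomial.X 0 ^ n := by
  unfold toPoly
  have : ∀ j : Fin (n + 1),
      MvPolynomial.monomial (monExp n (j : ℕ))
        (ofPoly n (MvPolynomial.C c * MvPolynomial.X 0 ^ n) j)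
      = if j = (0 : Fin (n + 1)) then MvPolynomial.monomial (monExp n 0) c else 0 := by
    intro j
    rw [ofPoly_cxn]
    by_cases hj : j = 0
    · simp [hj]
    · have hv : (j : ℕ) ≠ 0 := fun h => hj (Fin.ext (by simpa using h))
      rw [if_neg hj, if_neg hv, map_zero]
  rw [Finset.sum_congr rfl (fun j _ => this j), Finset.sum_ite_eq' Finset.univ]
  simp [monExp_zero, MvPolynomial.X_pow_eq_monomial, MvPolynomial.C_mul_monomial]

lemma subst_cxn (g : SL2) (c : ℂ) (n : ℕ) :
    subst g (MvPolynomial.C c * MvPolynomial.X 0 ^ n) =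
      MvPolynomial.C c *
        (MvPolynomial.C ((g : Matrix (Fin 2) (Fin 2) ℂ) 0 0) * MvPolynomial.X 0 +
         MvPolynomial.C ((g : Matrix (Fin 2) (Fin 2) ℂ) 1 0) * MvPolynomial.X 1) ^ n := by
  simp [subst, MvPolynomial.algebraMap_eq]

lemma coeff_lin_pow (a b : ℂ) (m : ℕ) :
    MvPolynomial.coeff (Finsupp.single (1 : Fin 2) m)
      ((MvPolynomial.C a * MvPolynomial.X 0 + MvPolynomial.C b * MvPolynomial.X 1) ^ m)
      = b ^ m := by
  induction m with
  | zero => simp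
  | succ m ih =>
    rw [pow_succ, mul_add]
    have h1 : Finsupp.single (1 : Fin 2) (m + 1)
        = Finsupp.single (1 : Fin 2) m + Finsupp.single (1 : Fin 2) 1 := by
      rw [← Finsupp.single_add]
    rw [MvPolynomial.coeff_add, h1]
    have h0 : MvPolynomial.coeff
        (Finsupp.single (1 : Fin 2) m + Finsupp.single (1 : Fin 2) 1)
        ((MvPolynomial.C a * MvPolynomial.X 0 + MvPolynomial.C b * MvPolynomial.X 1) ^ m *
          (MvPolynomial.C a * MvPolynomial.X 0)) = 0 := by
      rw [show ((MvPolynomial.C a * MvPolynomial.X 0 + MvPolynomial.C b * MvPolynomial.X 1) ^ m *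
          (MvPolynomial.C a * MvPolynomial.X (0 : Fin 2))) =
          (((MvPolynomial.C a * MvPolynomial.X 0 + MvPolynomial.C b * MvPolynomial.X 1) ^ m *
          MvPolynomial.C a) * MvPolynomial.X (0 : Fin 2)) by ring]
      rw [MvPolynomial.coeff_mul_X']
      rw [if_neg]
      simp [Finsupp.mem_support_iff, Finsupp.single_apply]
    rw [h0, zero_add]
    rw [show ((MvPolynomial.C a * MvPolynomial.X 0 + MvPolynomial.C b * MvPolynomial.X 1) ^ m *
        (MvPolynomial.C b * MvPolynomial.X (1 : Fin 2))) =
        (((MvPolynomial.C a * MvPolynomial.X 0 + MvPolynomial.C b * MvPolynomial.X 1) ^ m *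
        MvPolynomial.C b) * MvPolynomial.X (1 : Fin 2)) by ring]
    rw [MvPolynomial.coeff_mul_X, mul_comm _ (MvPolynomial.C b),
      MvPolynomial.coeff_C_mul, ih, pow_succ]
    ring

lemma charVal_ne_zero {k : ℕ} (χ : Fin k → ℤ) (t : Fin k → ℂˣ) : charVal χ t ≠ 0 := by
  unfold charVal
  rw [Finset.prod_ne_zero_iff]
  exact fun j _ => zpow_ne_zero _ (Units.ne_zero _)

lemma pval_ne_zero (e : ℂ →₀ ℕ) (d : ℂ) : pval e d ≠ 0 := by
  unfold pval
  rw [Finset.prod_ne_zero_iff]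
  intro a ha
  rw [Finset.mem_sdiff, Finset.mem_singleton] at ha
  exact pow_ne_zero _ (sub_ne_zero_of_ne ha.2)
/-- If `g ∈ G` maps a nonzero standard vector `v(d₁, R₁)` to a nonzero standard vector
`v(d₂, R₂)` and some index on the face `I(R₁)` has `nᵢ ≥ 1`, then the `SL₂(ℂ)`-component
of `g` is upper triangular; consequently standard vectors in the same `G`-orbit lie in
the same `B`-orbit. -/
theorem standard_vectors_same_orbit_implies_borel (k s : ℕ) (χ : Fin s → Fin k → ℤ)
    (n : Fin s → ℕ) (e : Fin s → ℂ →₀ ℕ) (he : ∀ i, eInf (e i) ≤ n i)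
    (d1 d2 : ℂ) (R1 R2 : (Fin k → ℚ) × ℚ)
    (hne1 : standardVec χ n e d1 R1 ≠ 0) (hne2 : standardVec χ n e d2 R2 ≠ 0)
    (hdeg : ∃ i, pairQ (χ i) (n i) R1 = 0 ∧ 1 ≤ n i)
    (g : (Fin k → ℂˣ) × SL2)
    (hg : Gact χ n g (standardVec χ n e d1 R1) = standardVec χ n e d2 R2) :
    (g.2 : Matrix (Fin 2) (Fin 2) ℂ) 1 0 = 0 ∧
    ∃ (t : Fin k → ℂˣ) (κ : ℂˣ) (l : ℂ),
      Gact χ n (t, upperSL κ l) (standardVec χ n e d1 R1) =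
        standardVec χ n e d2 R2 := by
  obtain ⟨i, hp, hn⟩ := hdeg
  set M := (g.2 : Matrix (Fin 2) (Fin 2) ℂ) with hM
  have hcomp := congrFun (congrFun hg i) (Fin.last (n i))
  have hv1 : standardVec χ n e d1 R1 i
      = ofPoly (n i) (MvPolynomial.C (pval (e i) d1) * MvPolynomial.X 0 ^ (n i)) := by
    simp [standardVec, hp]
  have hlhs : Gact χ n g (standardVec χ n e d1 R1) i (Fin.last (n i))
      = charVal (χ i) g.1 * (pval (e i) d1 * M 1 0 ^ (n i)) := by
    unfold Gact
    rw [hv1, toPoly_ofPoly_cxn, subst_cxn]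
    unfold ofPoly
    rw [Fin.val_last, monExp_self, MvPolynomial.coeff_C_mul, MvPolynomial.coeff_C_mul,
      coeff_lin_pow]
  have hrhs : standardVec χ n e d2 R2 i (Fin.last (n i)) = 0 := by
    unfold standardVec
    by_cases h2 : pairQ (χ i) (n i) R2 = 0
    · rw [if_pos h2, ofPoly_cxn, if_neg (by simp; omega)]
    · rw [if_neg h2]; rfl
  rw [hcomp, hrhs] at hlhs
  have hb : M 1 0 = 0 := by
    rcases mul_eq_zero.mp hlhs.symm with h | h
    · exact absurd h (charVal_ne_zero _ _)
    rcases mul_eq_zero.mp h with h | h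
    · exact absurd h (pval_ne_zero _ _)
    · exact (pow_eq_zero_iff (by omega)).mp h
  refine ⟨hb, g.1, ?_⟩
  have hdet : M 0 0 * M 1 1 = 1 := by
    have hd := g.2.2
    rw [Matrix.det_fin_two] at hd
    rw [← hM, hb, mul_zero, sub_zero] at hd
    exact hd
  refine ⟨⟨M 0 0, M 1 1, hdet, by rw [mul_comm]; exact hdet⟩, M 0 1, ?_⟩
  have hupp : upperSL ⟨M 0 0, M 1 1, hdet, by rw [mul_comm]; exact hdet⟩ (M 0 1) = g.2 := by
    apply Subtype.ext
    show _ = M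
    ext a b
    fin_cases a <;> fin_cases b <;>
      simp [upperSL, hb.symm]
  rw [hupp]
  exact hg
end
end

section
/- Let $I(R)$ be an admissible face of the cone $M$, determined by $R=(r_1,\dots,r_k,p)$ with $p<0$, and let $d_1,d_2\in\mathbb{C}$. Then the standard vectors $v(d_1,R)$ and $v(d_2,R)$ lie in the same $B$-orbit if and only if there exists $t'\in(\mathbb{C}^{\times})^{k}$ with $\chi_i(t')\,p_i(d_1)=p_i(d_2)$ for all $i\in I(R)$; equivalently, if and only if for every integer-valued vector $\beta=(\beta_i)_{i\in I(R)}$ with $\sum_{i\in I(R)}\beta_i\chi_i=0$ one has $\prod_{i\in I(R)}p_i(d_1)^{\beta_i}=\prod_{i\in I(R)}p_i(d_2)^{\beta_i}$. -/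
open scoped BigOperators

noncomputable section

open MvPolynomial in
lemma monExp_eq_iff {n : ℕ} (j : Fin (n + 1)) :
    monExp n (j : ℕ) = Finsupp.single (0 : Fin 2) n ↔ (j : ℕ) = 0 := by
  constructor
  · intro h
    have := DFunLike.congr_fun h (1 : Fin 2)
    simpa [monExp, Finsupp.single_apply] using this
  · intro h
    simp [monExp, h]

open MvPolynomial in
lemma ofPoly_CXpow (n : ℕ) (c : ℂ) :
    ofPoly n (C c * X 0 ^ n) = fun j : Fin (n+1) => if (j : ℕ) = 0 then c else 0 := by
  funext j
  rw [ofPoly, C_mul_X_pow_eq_monomial, coeff_monomial]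
  by_cases h : (j : ℕ) = 0
  · rw [if_pos h, if_pos ((monExp_eq_iff j).mpr h).symm]
  · rw [if_neg h, if_neg (fun hh => h ((monExp_eq_iff j).mp hh.symm))]

open MvPolynomial in
lemma toPoly_ite (n : ℕ) (c : ℂ) :
    toPoly (fun j : Fin (n+1) => if (j : ℕ) = 0 then c else 0) = C c * X 0 ^ n := by
  rw [toPoly, C_mul_X_pow_eq_monomial]
  rw [Finset.sum_eq_single (0 : Fin (n+1))]
  · simp [monExp_eq_iff, monExp]
  · intro b _ hb
    have : (b : ℕ) ≠ 0 := fun h => hb (Fin.ext h)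
    simp [this]
  · simp
open MvPolynomial in
lemma subst_upper_CXpow (κ : ℂˣ) (l : ℂ) (n : ℕ) (c : ℂ) :
    subst (upperSL κ l) (C c * X 0 ^ n) = C (c * (κ : ℂ) ^ n) * X 0 ^ n := by
  have h0 : ((upperSL κ l : SL2) : Matrix (Fin 2) (Fin 2) ℂ) 0 0 = (κ : ℂ) := by
    simp [upperSL]
  have h1 : ((upperSL κ l : SL2) : Matrix (Fin 2) (Fin 2) ℂ) 1 0 = 0 := by
    simp [upperSL]
  rw [subst, map_mul, map_pow, aeval_C, aeval_X, h0, h1, algebraMap_eq]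
  rw [map_zero, zero_mul, add_zero, mul_pow, ← C_pow, mul_left_comm]
  rw [← mul_assoc, ← C_mul, mul_comm ((κ:ℂ) ^ n) c]

open MvPolynomial in
lemma toPoly_zero (n : ℕ) : toPoly (0 : Fin (n+1) → ℂ) = 0 := by
  simp [toPoly]

open MvPolynomial in
lemma ofPoly_zero (n : ℕ) : ofPoly n (0 : MvPolynomial (Fin 2) ℂ) = 0 := by
  funext j; simp [ofPoly]

open MvPolynomial in
lemma Gact_standardVec {k s : ℕ} (χ : Fin s → Fin k → ℤ) (n : Fin s → ℕ)
    (e : Fin s → ℂ →₀ ℕ) (d : ℂ) (R : (Fin k → ℚ) × ℚ) (t : Fin k → ℂˣ)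
    (κ : ℂˣ) (l : ℂ) :
    Gact χ n (t, upperSL κ l) (standardVec χ n e d R) = fun i =>
      if pairQ (χ i) (n i) R = 0 then
        ofPoly (n i) (C (charVal (χ i) t * (κ : ℂ) ^ (n i) * pval (e i) d) * X 0 ^ (n i))
      else 0 := by
  funext i
  by_cases h : pairQ (χ i) (n i) R = 0
  · rw [if_pos h]
    show ofPoly (n i) _ = _
    rw [standardVec]
    rw [if_pos h, ofPoly_CXpow, toPoly_ite, subst_upper_CXpow]
    rw [← mul_assoc, ← C_mul]
    ring_nf
  · rw [if_neg h]
    show ofPoly (n i) _ = _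
    rw [standardVec, if_neg h, toPoly_zero]
    show ofPoly (n i) (_ * subst (upperSL κ l) 0) = 0
    rw [subst, map_zero, mul_zero, ofPoly_zero]
open MvPolynomial in
lemma mem_Borbit_iff {k s : ℕ} (χ : Fin s → Fin k → ℤ) (n : Fin s → ℕ)
    (e : Fin s → ℂ →₀ ℕ) (R : (Fin k → ℚ) × ℚ) (d1 d2 : ℂ) :
    standardVec χ n e d2 R ∈ Borbit χ n (standardVec χ n e d1 R) ↔
      ∃ (t : Fin k → ℂˣ) (κ : ℂˣ), ∀ i, pairQ (χ i) (n i) R = 0 →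
        charVal (χ i) t * (κ : ℂ) ^ (n i) * pval (e i) d1 = pval (e i) d2 := by
  constructor
  · rintro ⟨t, κ, l, hw⟩
    refine ⟨t, κ, fun i hi => ?_⟩
    rw [Gact_standardVec] at hw
    have := congr_fun (congr_fun hw i) ⟨0, Nat.succ_pos _⟩
    rw [standardVec, if_pos hi, if_pos hi, ofPoly_CXpow, ofPoly_CXpow] at this
    simpa using this.symm
  · rintro ⟨t, κ, h⟩
    refine ⟨t, κ, 0, ?_⟩
    rw [Gact_standardVec]
    funext i
    by_cases hi : pairQ (χ i) (n i) R = 0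
    · rw [standardVec, if_pos hi, if_pos hi, h i hi]
    · rw [standardVec, if_neg hi, if_neg hi]
/-- The character value as a unit. -/
def uCharVal {k : ℕ} (χi : Fin k → ℤ) (t : Fin k → ℂˣ) : ℂˣ := ∏ j, t j ^ χi j

lemma charVal_eq_uCharVal {k : ℕ} (χi : Fin k → ℤ) (t : Fin k → ℂˣ) :
    charVal χi t = (uCharVal χi t : ℂ) := by
  rw [charVal, uCharVal]
  norm_cast

lemma zpow_finset_sum {G : Type*} [CommGroup G] (σ : G) {ι : Type*} (s : Finset ι)
    (c : ι → ℤ) : σ ^ (∑ i ∈ s, c i) = ∏ i ∈ s, σ ^ c i := by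
  classical
  induction s using Finset.cons_induction with
  | empty => simp
  | cons a s ha ih => rw [Finset.sum_cons, Finset.prod_cons, zpow_add, ih]

lemma prod_uCharVal_zpow {k s : ℕ} (χ : Fin s → Fin k → ℤ) (t : Fin k → ℂˣ)
    (β : Fin s → ℤ) (hβ : ∀ j, ∑ i, β i * χ i j = 0) :
    ∏ i, (uCharVal (χ i) t) ^ β i = 1 := by
  have hdist : ∀ i : Fin s, (uCharVal (χ i) t) ^ β i = ∏ j, (t j ^ χ i j) ^ β i :=
    fun i => map_prod (zpowGroupHom (β i)) _ _
  have inner : ∀ j : Fin k, ∏ i, (t j ^ χ i j) ^ β i = 1 := by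
    intro j
    have h1 : ∀ i : Fin s, (t j ^ χ i j) ^ β i = t j ^ (β i * χ i j) := fun i => by
      rw [← zpow_mul, mul_comm]
    rw [Finset.prod_congr rfl fun i _ => h1 i, ← zpow_finset_sum, hβ j, zpow_zero]
  rw [Finset.prod_congr rfl fun i _ => hdist i, Finset.prod_comm,
    Finset.prod_congr rfl fun j _ => inner j, Finset.prod_const_one]
lemma sum_beta_n {k s : ℕ} (χ : Fin s → Fin k → ℤ) (n : Fin s → ℕ)
    (R : (Fin k → ℚ) × ℚ) (hp : R.2 ≠ 0) (β : Fin s → ℤ)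
    (hsupp : ∀ i, pairQ (χ i) (n i) R ≠ 0 → β i = 0)
    (hrel : ∀ j, ∑ i, β i * χ i j = 0) :
    ∑ i, β i * (n i : ℤ) = 0 := by
  have h0 : ∑ i, (β i : ℚ) * pairQ (χ i) (n i) R = 0 := by
    refine Finset.sum_eq_zero fun i _ => ?_
    by_cases hi : pairQ (χ i) (n i) R = 0
    · rw [hi, mul_zero]
    · rw [hsupp i hi]; simp
  have expand : ∑ i, (β i : ℚ) * pairQ (χ i) (n i) R =
      (∑ j, (↑(∑ i, β i * χ i j) : ℚ) * R.1 j) + (↑(∑ i, β i * (n i : ℤ)) : ℚ) * R.2 := by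
    simp only [pairQ, mul_add, Finset.sum_add_distrib, Finset.mul_sum, Int.cast_sum,
      Int.cast_mul, Finset.sum_mul]
    congr 1
    · rw [Finset.sum_comm]
      exact Finset.sum_congr rfl fun j _ => Finset.sum_congr rfl fun i _ => by ring
    · exact Finset.sum_congr rfl fun i _ => by push_cast; ring
  rw [expand] at h0
  simp only [hrel, Int.cast_zero, zero_mul, Finset.sum_const_zero, zero_add] at h0
  have := mul_eq_zero.mp h0
  rcases this with h | h
  · exact_mod_cast h
  · exact absurd h hp

lemma Borbit_imp_beta {k s : ℕ} (χ : Fin s → Fin k → ℤ) (n : Fin s → ℕ)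
    (e : Fin s → ℂ →₀ ℕ) (R : (Fin k → ℚ) × ℚ) (hp : R.2 ≠ 0) (d1 d2 : ℂ)
    (t : Fin k → ℂˣ) (κ : ℂˣ)
    (h : ∀ i, pairQ (χ i) (n i) R = 0 →
      charVal (χ i) t * (κ : ℂ) ^ (n i) * pval (e i) d1 = pval (e i) d2)
    (β : Fin s → ℤ) (hsupp : ∀ i, pairQ (χ i) (n i) R ≠ 0 → β i = 0)
    (hrel : ∀ j, ∑ i, β i * χ i j = 0) :
    ∏ i, pval (e i) d1 ^ β i = ∏ i, pval (e i) d2 ^ β i := by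
  -- work with units
  set u1 : Fin s → ℂˣ := fun i => Units.mk0 _ (pval_ne_zero (e i) d1) with hu1
  set u2 : Fin s → ℂˣ := fun i => Units.mk0 _ (pval_ne_zero (e i) d2) with hu2
  have key : ∏ i, u1 i ^ β i = ∏ i, u2 i ^ β i := by
    have termwise : ∀ i : Fin s,
        u2 i ^ β i = (uCharVal (χ i) t) ^ β i * (κ ^ (n i : ℤ)) ^ β i * u1 i ^ β i := by
      intro i
      by_cases hi : pairQ (χ i) (n i) R = 0
      · have h2 : u2 i = uCharVal (χ i) t * κ ^ (n i : ℤ) * u1 i := by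
          ext
          rw [Units.val_mul, Units.val_mul, Units.val_zpow_eq_zpow_val,
            ← charVal_eq_uCharVal]
          show pval (e i) d2 = charVal (χ i) t * (κ : ℂ) ^ ((n i : ℕ) : ℤ) * pval (e i) d1
          rw [zpow_natCast]
          exact (h i hi).symm
        rw [h2, mul_zpow, mul_zpow]
      · rw [hsupp i hi]
        simp
    rw [Finset.prod_congr rfl fun i _ => termwise i]
    rw [Finset.prod_mul_distrib, Finset.prod_mul_distrib,
      prod_uCharVal_zpow χ t β hrel, one_mul]
    have hκ : ∏ i, (κ ^ (n i : ℤ)) ^ β i = 1 := by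
      have h1 : ∀ i : Fin s, (κ ^ (n i : ℤ)) ^ β i = κ ^ (β i * (n i : ℤ)) := fun i => by
        rw [← zpow_mul, mul_comm]
      rw [Finset.prod_congr rfl fun i _ => h1 i, ← zpow_finset_sum,
        sum_beta_n χ n R hp β hsupp hrel, zpow_zero]
    rw [hκ, one_mul]
  have := congrArg (fun u : ℂˣ => (u : ℂ)) key
  simpa [Units.val_zpow_eq_zpow_val, hu1, hu2] using this
lemma exists_zpow_eq_units (z : ℂˣ) (m : ℤ) (hm : m ≠ 0) : ∃ w : ℂˣ, w ^ m = z := by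
  have hpos : 0 < m.natAbs := Int.natAbs_pos.mpr hm
  obtain ⟨w0, hw0⟩ := IsAlgClosed.exists_pow_nat_eq (z : ℂ) hpos
  have hw0ne : w0 ≠ 0 := by
    intro h
    rw [h, zero_pow hpos.ne'] at hw0
    exact z.ne_zero hw0.symm
  refine ?_
  set w : ℂˣ := Units.mk0 w0 hw0ne with hw
  have hwn : w ^ (m.natAbs : ℤ) = z := by
    ext
    rw [Units.val_zpow_eq_zpow_val, zpow_natCast]
    exact hw0
  rcases Int.natAbs_eq m with h | h
  · exact ⟨w, by rw [h]; exact hwn⟩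
  · refine ⟨w⁻¹, ?_⟩
    rw [h, zpow_neg, inv_zpow, inv_inv]
    exact hwn

noncomputable instance : DivisibleBy (Additive ℂˣ) ℤ where
  div a m := if hm : m = 0 then 0 else
    Additive.ofMul (exists_zpow_eq_units (Additive.toMul a) m hm).choose
  div_zero a := by simp
  div_cancel a hm := by
    rw [dif_neg hm]
    apply Additive.toMul.injective
    rw [toMul_zsmul, toMul_ofMul]
    exact (exists_zpow_eq_units (Additive.toMul a) _ hm).choose_spec

lemma exists_char_ext {k s : ℕ} (χ : Fin s → Fin k → ℤ) (q : Fin s → ℂˣ)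
    (P : Fin s → Prop) [DecidablePred P]
    (hrel : ∀ β : Fin s → ℤ, (∀ i, ¬ P i → β i = 0) → (∀ j, ∑ i, β i * χ i j = 0) →
      ∏ i, q i ^ β i = 1) :
    ∃ t : Fin k → ℂˣ, ∀ i, P i → uCharVal (χ i) t = q i := by
  classical
  -- the linear map β ↦ ∑ᵢ βᵢ χᵢ
  let L : (Fin s → ℤ) →ₗ[ℤ] (Fin k → ℤ) :=
    { toFun := fun β => fun j => ∑ i, β i * χ i j
      map_add' := fun β γ => by
        funext j; simp [add_mul, Finset.sum_add_distrib]
      map_smul' := fun c β => by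
        funext j; simp [Finset.mul_sum, mul_assoc] }
  -- the submodule of β supported on P
  let S : Submodule ℤ (Fin s → ℤ) :=
    { carrier := {β | ∀ i, ¬ P i → β i = 0}
      zero_mem' := fun i _ => rfl
      add_mem' := fun {β γ} hβ hγ i hi => by
        show β i + γ i = 0
        rw [hβ i hi, hγ i hi, add_zero]
      smul_mem' := fun c β hβ i hi => by
        show c * β i = 0
        rw [hβ i hi, mul_zero] }
  -- the map β ↦ ∏ᵢ qᵢ^{βᵢ}, additively
  let φ : (Fin s → ℤ) →ₗ[ℤ] Additive ℂˣ :=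
    { toFun := fun β => ∑ i, β i • Additive.ofMul (q i)
      map_add' := fun β γ => by
        simp [add_smul, add_zsmul, Finset.sum_add_distrib]
      map_smul' := fun c β => by
        simp only [RingHom.id_apply, Pi.smul_apply, smul_eq_mul]
        calc ∑ x, (c * β x) • Additive.ofMul (q x)
            = ∑ x, c • (β x • Additive.ofMul (q x)) :=
              Finset.sum_congr rfl fun i _ => mul_smul c (β i) (Additive.ofMul (q i))
          _ = c • ∑ i, β i • Additive.ofMul (q i) :=
              (Finset.smul_sum (M := ℤ) (N := Additive ℂˣ) (r := c)
                (f := fun i => β i • Additive.ofMul (q i)) (s := Finset.univ)).symm }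
  have toMul_φ : ∀ β : Fin s → ℤ, Additive.toMul (φ β) = ∏ i, q i ^ β i := by
    intro β
    show Additive.toMul (∑ i, β i • Additive.ofMul (q i)) = _
    rw [toMul_sum]
    exact Finset.prod_congr rfl fun i _ => by rw [toMul_zsmul, toMul_ofMul]
  let f' := L.comp S.subtype
  let φ' := φ.comp S.subtype
  have hker : LinearMap.ker f' ≤ LinearMap.ker φ' := by
    intro β hβ
    rw [LinearMap.mem_ker] at hβ ⊢
    apply Additive.toMul.injective
    show Additive.toMul (φ (β : Fin s → ℤ)) = Additive.toMul (0 : Additive ℂˣ)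
    rw [toMul_φ]
    exact hrel (β : Fin s → ℤ) β.2 fun j => congr_fun hβ j
  let ψ : LinearMap.range f' →ₗ[ℤ] Additive ℂˣ :=
    ((LinearMap.ker f').liftQ φ' hker).comp f'.quotKerEquivRange.symm.toLinearMap
  have hψ : ∀ β : S, ψ ⟨f' β, LinearMap.mem_range_self _ β⟩ = φ' β := by
    intro β
    have h1 : f'.quotKerEquivRange (Submodule.Quotient.mk β) =
        ⟨f' β, LinearMap.mem_range_self _ β⟩ :=
      Subtype.ext (LinearMap.quotKerEquivRange_apply_mk f' β)
    have h2 : f'.quotKerEquivRange.symm ⟨f' β, LinearMap.mem_range_self _ β⟩ =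
        Submodule.Quotient.mk β := by
      rw [← h1, LinearEquiv.symm_apply_apply]
    show ((LinearMap.ker f').liftQ φ' hker)
        (f'.quotKerEquivRange.symm ⟨f' β, LinearMap.mem_range_self _ β⟩) = φ' β
    rw [h2, Submodule.liftQ_apply]
  -- extend ψ to all of ℤᵏ using injectivity of the divisible group Additive ℂˣ
  have hinj : Module.Injective ℤ (Additive ℂˣ) :=
    (Module.Baer.of_divisible (Additive ℂˣ)).injective
  obtain ⟨h, hh⟩ := hinj.out (LinearMap.range f').subtype
    (Submodule.injective_subtype _) ψ
  refine ⟨fun j => Additive.toMul (h fun j' => if j = j' then 1 else 0), fun i hi => ?_⟩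
  -- the delta vector at i
  have hδS : (fun i' => if i = i' then (1 : ℤ) else 0) ∈ S := by
    intro i' hi'
    have : i ≠ i' := fun hii => hi' (hii ▸ hi)
    simp [this]
  have hLδ : f' (⟨_, hδS⟩ : S) = χ i := by
    funext j
    show ∑ i', (if i = i' then (1 : ℤ) else 0) * χ i' j = χ i j
    simp [ite_mul]
  have hχmem : χ i ∈ LinearMap.range f' := ⟨⟨_, hδS⟩, hLδ⟩
  have hhχ : h (χ i) = φ' (⟨_, hδS⟩ : S) := by
    have := hh ⟨χ i, hχmem⟩
    rw [Submodule.coe_subtype] at this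
    show h (χ i) = _
    rw [this]
    have : (⟨χ i, hχmem⟩ : LinearMap.range f') =
        ⟨f' (⟨_, hδS⟩ : S), LinearMap.mem_range_self _ _⟩ := Subtype.ext hLδ.symm
    rw [this, hψ]
  have hφδ : Additive.toMul (φ' (⟨_, hδS⟩ : S)) = q i := by
    show Additive.toMul (φ fun i' => if i = i' then (1 : ℤ) else 0) = q i
    rw [toMul_φ]
    simp
  have hpi : h (χ i) = ∑ j, χ i j • h (fun j' => if j = j' then (1 : ℤ) else 0) :=
    LinearMap.pi_apply_eq_sum_univ h (χ i)
  have : uCharVal (χ i) (fun j => Additive.toMul (h fun j' => if j = j' then 1 else 0)) =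
      Additive.toMul (h (χ i)) := by
    rw [hpi, toMul_sum, uCharVal]
    exact Finset.prod_congr rfl fun j _ => by rw [toMul_zsmul]
  rw [this, hhχ, hφδ]
lemma val_prod_zpow {s : ℕ} (u : Fin s → ℂˣ) (β : Fin s → ℤ) :
    ((∏ i, u i ^ β i : ℂˣ) : ℂ) = ∏ i, (u i : ℂ) ^ β i :=
  calc ((∏ i, u i ^ β i : ℂˣ) : ℂ) = Units.coeHom ℂ (∏ i, u i ^ β i) := rfl
    _ = ∏ i, Units.coeHom ℂ (u i ^ β i) := map_prod _ _ _
    _ = ∏ i, (u i : ℂ) ^ β i := by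
        exact Finset.prod_congr rfl fun i _ => Units.val_zpow_eq_zpow_val _ _
/-- For an admissible face `I(R)` of the cone `M`, two standard vectors `v(d₁, R)` and
`v(d₂, R)` lie in the same `B`-orbit iff there is `t' ∈ (ℂˣ)ᵏ` with
`χᵢ(t') pᵢ(d₁) = pᵢ(d₂)` for all `i ∈ I(R)`; equivalently, iff
`∏ pᵢ(d₁)^{βᵢ} = ∏ pᵢ(d₂)^{βᵢ}` for every integer vector `β` supported on `I(R)` with
`∑ βᵢ χᵢ = 0`. -/
theorem standard_vectors_same_B_orbit_iff (k s : ℕ) (χ : Fin s → Fin k → ℤ)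
    (n : Fin s → ℕ) (e : Fin s → ℂ →₀ ℕ) (he : ∀ i, eInf (e i) ≤ n i)
    (R : (Fin k → ℚ) × ℚ) (hp : R.2 < 0) (hR : ∀ i, 0 ≤ pairQ (χ i) (n i) R)
    (d1 d2 : ℂ) :
    (standardVec χ n e d2 R ∈ Borbit χ n (standardVec χ n e d1 R) ↔
      ∃ t' : Fin k → ℂˣ, ∀ i, pairQ (χ i) (n i) R = 0 →
        charVal (χ i) t' * pval (e i) d1 = pval (e i) d2) ∧
    (standardVec χ n e d2 R ∈ Borbit χ n (standardVec χ n e d1 R) ↔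
      ∀ β : Fin s → ℤ, (∀ i, pairQ (χ i) (n i) R ≠ 0 → β i = 0) →
        (∀ j, ∑ i, β i * χ i j = 0) →
        ∏ i, pval (e i) d1 ^ β i = ∏ i, pval (e i) d2 ^ β i) := by
  have hpne : R.2 ≠ 0 := ne_of_lt hp
  have h1 : standardVec χ n e d2 R ∈ Borbit χ n (standardVec χ n e d1 R) →
      ∀ β : Fin s → ℤ, (∀ i, pairQ (χ i) (n i) R ≠ 0 → β i = 0) →
        (∀ j, ∑ i, β i * χ i j = 0) →
        ∏ i, pval (e i) d1 ^ β i = ∏ i, pval (e i) d2 ^ β i := by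
    intro hB β hsupp hrel
    obtain ⟨t, κ, h⟩ := (mem_Borbit_iff χ n e R d1 d2).mp hB
    exact Borbit_imp_beta χ n e R hpne d1 d2 t κ h β hsupp hrel
  have h2 : (∀ β : Fin s → ℤ, (∀ i, pairQ (χ i) (n i) R ≠ 0 → β i = 0) →
        (∀ j, ∑ i, β i * χ i j = 0) →
        ∏ i, pval (e i) d1 ^ β i = ∏ i, pval (e i) d2 ^ β i) →
      ∃ t' : Fin k → ℂˣ, ∀ i, pairQ (χ i) (n i) R = 0 →
        charVal (χ i) t' * pval (e i) d1 = pval (e i) d2 := by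
    intro hβ
    classical
    set u1 : Fin s → ℂˣ := fun i => Units.mk0 _ (pval_ne_zero (e i) d1) with hu1
    set u2 : Fin s → ℂˣ := fun i => Units.mk0 _ (pval_ne_zero (e i) d2) with hu2
    have hrel' : ∀ β : Fin s → ℤ,
        (∀ i, ¬ (pairQ (χ i) (n i) R = 0) → β i = 0) →
        (∀ j, ∑ i, β i * χ i j = 0) → ∏ i, (u2 i / u1 i) ^ β i = 1 := by
      intro β hsupp hrel
      have hc := hβ β hsupp hrel
      apply Units.ext
      rw [val_prod_zpow, Units.val_one]
      have step : ∀ i : Fin s, ((u2 i / u1 i : ℂˣ) : ℂ) ^ β i =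
          pval (e i) d2 ^ β i / pval (e i) d1 ^ β i := by
        intro i
        rw [Units.val_div_eq_div_val, div_zpow]
        simp [hu1, hu2]
      rw [Finset.prod_congr rfl fun i _ => step i, Finset.prod_div_distrib, ← hc,
        div_self]
      exact Finset.prod_ne_zero_iff.mpr fun i _ =>
        zpow_ne_zero _ (pval_ne_zero (e i) d1)
    obtain ⟨t, ht⟩ := exists_char_ext χ (fun i => u2 i / u1 i)
      (fun i => pairQ (χ i) (n i) R = 0) hrel'
    refine ⟨t, fun i hi => ?_⟩
    have h3 := ht i hi
    rw [charVal_eq_uCharVal, h3, Units.val_div_eq_div_val]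
    show (pval (e i) d2 / pval (e i) d1) * pval (e i) d1 = pval (e i) d2
    exact div_mul_cancel₀ _ (pval_ne_zero (e i) d1)
  have h3 : (∃ t' : Fin k → ℂˣ, ∀ i, pairQ (χ i) (n i) R = 0 →
        charVal (χ i) t' * pval (e i) d1 = pval (e i) d2) →
      standardVec χ n e d2 R ∈ Borbit χ n (standardVec χ n e d1 R) := by
    rintro ⟨t, ht⟩
    refine (mem_Borbit_iff χ n e R d1 d2).mpr ⟨t, 1, fun i hi => ?_⟩
    rw [Units.val_one, one_pow, mul_one]
    exact ht i hi
  exact ⟨⟨fun hB => h2 (h1 hB), h3⟩, ⟨h1, fun hβ => h3 (h2 hβ)⟩⟩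
end
end
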